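/- arXiv:2303.07785 — 8 statements merged into one kernel-verified Lean document; each statement's English description precedes it below -/
import Mathlib

section
/- Let λ be a nonzero algebraic number of degree d and let S be a set of field embeddings ℚ(λ) → ℂ. If there is an integer j_0 ≥ 0 such that ∑_{σ ∈ S} σ(λ)^j ∈ ℚ for all j with j_0 ≤ j < j_0 + d, then S is either empty or consists of all d field embeddings of ℚ(λ) into ℂ. -/
open scoped BigOperators

/-- The field `K = ℚ(λ)` realized inside `ℂ`. -/
noncomputable abbrev Qlam (lam : ℂ) : IntermediateField ℚ ℂ := IntermediateField.adjoin ℚ {lam}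

/-- `λ` as an element of `ℚ(λ)`. -/
noncomputable def lamGen (lam : ℂ) : Qlam lam :=
  ⟨lam, IntermediateField.mem_adjoin_simple_self ℚ lam⟩

open Classical in
/-- `Σ_<(y) = ∑ σ(y)`, the sum over all field embeddings `σ : ℚ(λ) → ℂ` with `|σ(λ)| < 1`. -/
noncomputable def SigmaLt (lam : ℂ) (y : Qlam lam) : ℂ :=
  ∑ᶠ σ : (Qlam lam →ₐ[ℚ] ℂ), if ‖σ (lamGen lam)‖ < 1 then σ y else 0

/-- The Galois conjugates of `lam` : the roots in `ℂ` of its minimal polynomial over `ℚ`. -/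
noncomputable def conjugates {A : Type*} [Field A] [Algebra ℚ A] (lam : A) : Multiset ℂ :=
  ((minpoly ℚ lam).map (algebraMap ℚ ℂ)).roots

/-- Vandermonde-type lemma: a linear relation among `d` consecutive powers of `d` distinct
nonzero elements forces all coefficients to vanish. -/
private lemma vandermonde_window_eq_zero {F : Type*} [Field F] {ι : Type*} [Fintype ι]
    {d j0 : ℕ} (hcard : Fintype.card ι = d) {v : ι → F} (hv : Function.Injective v)
    (hv0 : ∀ i, v i ≠ 0) {c : ι → F}
    (h : ∀ k, k < d → ∑ i, c i * v i ^ (j0 + k) = 0) : ∀ i, c i = 0 := by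
  let e : Fin d ≃ ι := (Fintype.equivFinOfCardEq hcard).symm
  set c' : Fin d → F := fun i => c (e i) * v (e i) ^ j0 with hc'
  have key : ∀ k : Fin d, ∑ i : Fin d, c' i * (v (e i)) ^ (k : ℕ) = 0 := by
    intro k
    have h1 := h k k.2
    rw [← Equiv.sum_comp e (fun i => c i * v i ^ (j0 + (k : ℕ)))] at h1
    rw [← h1]
    refine Finset.sum_congr rfl fun i _ => ?_
    rw [hc', pow_add, mul_assoc]
  have hzero := Matrix.eq_zero_of_forall_pow_sum_mul_pow_eq_zero
    (f := fun i => v (e i)) (v := c') (hv.comp e.injective) key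
  intro i
  have h3 : c (e (e.symm i)) * v (e (e.symm i)) ^ j0 = 0 := by
    have h2 : c' (e.symm i) = 0 := by rw [hzero]; rfl
    exact h2
  rw [e.apply_symm_apply] at h3
  exact (mul_eq_zero.mp h3).resolve_right (pow_ne_zero _ (hv0 i))


/-- Let `lam` be a nonzero algebraic number of degree `d` and `S` a set of
field embeddings `ℚ(lam) → ℂ`. If `∑_{σ ∈ S} σ(lam)^j ∈ ℚ` for `d` consecutive values of
`j`, then `S` is empty or consists of all the embeddings. -/
theorem set_of_embeddings_empty_or_univ_of_powerSums_rational
    (lam : ℂ) (halg : IsAlgebraic ℚ lam) (hne : lam ≠ 0)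
    (S : Set (Qlam lam →ₐ[ℚ] ℂ)) (j0 : ℕ)
    (hS : ∀ j : ℕ, j0 ≤ j → j < j0 + (minpoly ℚ lam).natDegree →
      ∃ q : ℚ, (∑ᶠ σ ∈ S, (σ (lamGen lam)) ^ j) = (q : ℂ)) :
    S = ∅ ∨ S = Set.univ := by
  classical
  have hint : IsIntegral ℚ lam := halg.isIntegral
  set p : Polynomial ℚ := minpoly ℚ lam with hpdef
  have hirr : Irreducible p := minpoly.irreducible hint
  have hpne : p ≠ 0 := minpoly.ne_zero hint
  have hsep : p.Separable := hirr.separable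
  set d : ℕ := p.natDegree with hd
  haveI : Fact (p.map (algebraMap ℚ ℂ)).Splits := ⟨IsAlgClosed.splits (p.map (algebraMap ℚ ℂ))⟩
  haveI : FiniteDimensional ℚ (Qlam lam) := IntermediateField.adjoin.finiteDimensional hint
  -- the equivalence between embeddings and roots in the splitting field
  let E0 : (Qlam lam →ₐ[ℚ] ℂ) ≃ { x // x ∈ p.aroots ℂ } :=
    IntermediateField.algHomAdjoinIntegralEquiv ℚ hint
  have hE0 : ∀ σ : Qlam lam →ₐ[ℚ] ℂ, (E0 σ : ℂ) = σ (lamGen lam) := by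
    intro σ
    conv_rhs => rw [← Equiv.symm_apply_apply E0 σ]
    exact (IntermediateField.algHomAdjoinIntegralEquiv_symm_apply_gen ℚ hint (E0 σ)).symm
  let E1 : { x // x ∈ p.aroots ℂ } ≃ p.rootSet ℂ :=
    Equiv.subtypeEquivRight (fun x => by
      simp [Polynomial.rootSet, Finset.mem_coe, Multiset.mem_toFinset])
  let E2 : (Qlam lam →ₐ[ℚ] ℂ) ≃ p.rootSet p.SplittingField :=
    (E0.trans E1).trans (Polynomial.Gal.rootsEquivRoots p ℂ).symm
  have hE2 : ∀ σ : Qlam lam →ₐ[ℚ] ℂ,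
      algebraMap p.SplittingField ℂ (E2 σ : p.SplittingField) = σ (lamGen lam) := by
    intro σ
    have h1 : Polynomial.Gal.rootsEquivRoots p ℂ (E2 σ) = E1 (E0 σ) :=
      (Polynomial.Gal.rootsEquivRoots p ℂ).apply_symm_apply _
    have h2 : (Polynomial.Gal.rootsEquivRoots p ℂ (E2 σ) : ℂ)
        = algebraMap p.SplittingField ℂ (E2 σ : p.SplittingField) := rfl
    rw [← hE0 σ, ← h2, h1]
    rfl
  -- the root set in the splitting field
  have hcard : Fintype.card (p.rootSet p.SplittingField) = d :=
    Polynomial.card_rootSet_eq_natDegree hsep (Polynomial.SplittingField.splits p)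
  have hvinj : Function.Injective
      (fun ν : p.rootSet p.SplittingField => (ν : p.SplittingField)) := Subtype.val_injective
  have hv0 : ∀ ν : p.rootSet p.SplittingField, (ν : p.SplittingField) ≠ 0 := by
    intro ν h0
    have hmem := ν.2
    rw [Polynomial.mem_rootSet] at hmem
    have haev := hmem.2
    rw [h0, ← Polynomial.coeff_zero_eq_aeval_zero'] at haev
    exact minpoly.coeff_zero_ne_zero hint hne
      ((map_eq_zero (algebraMap ℚ p.SplittingField)).mp haev)
  -- indicator of the image of S among roots
  have hSfin : S.Finite := Set.toFinite S
  set Sfin : Finset (Qlam lam →ₐ[ℚ] ℂ) := hSfin.toFinset with hSfindef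
  set T : Finset (p.rootSet p.SplittingField) := Sfin.image E2 with hTdef
  set c0 : p.rootSet p.SplittingField → p.SplittingField :=
    (fun ν => if ν ∈ T then 1 else 0) with hc0def
  -- the window hypothesis, transported to the splitting field
  have hwin : ∀ j : ℕ, j0 ≤ j → j < j0 + d →
      ∃ q : ℚ, ∑ ν : p.rootSet p.SplittingField, c0 ν * (ν : p.SplittingField) ^ j
        = algebraMap ℚ p.SplittingField q := by
    intro j h1 h2
    obtain ⟨q, hq⟩ := hS j h1 h2
    refine ⟨q, (algebraMap p.SplittingField ℂ).injective ?_⟩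
    rw [map_sum]
    have step1 : ∑ σ ∈ Sfin, (σ (lamGen lam)) ^ j
        = ∑ ν ∈ T, (algebraMap p.SplittingField ℂ (ν : p.SplittingField)) ^ j := by
      rw [hTdef, Finset.sum_image (fun a _ b _ h => E2.injective h)]
      exact Finset.sum_congr rfl fun σ _ => by rw [hE2 σ]
    have step2 : ∀ ν : p.rootSet p.SplittingField,
        algebraMap p.SplittingField ℂ (c0 ν * (ν : p.SplittingField) ^ j)
        = if ν ∈ T then (algebraMap p.SplittingField ℂ (ν : p.SplittingField)) ^ j else 0 := by
      intro ν
      by_cases hν : ν ∈ T <;> simp [hc0def, hν]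
    have key : ∑ ν : p.rootSet p.SplittingField,
        algebraMap p.SplittingField ℂ (c0 ν * (ν : p.SplittingField) ^ j)
        = ∑ᶠ σ ∈ S, (σ (lamGen lam)) ^ j := by
      have hcoe : S = (Sfin : Set (Qlam lam →ₐ[ℚ] ℂ)) := (Set.Finite.coe_toFinset hSfin).symm
      conv_rhs => rw [hcoe]
      rw [finsum_mem_coe_finset, step1]
      simp_rw [step2]
      rw [Finset.sum_ite_mem, Finset.univ_inter]
    rw [key, hq, ← IsScalarTower.algebraMap_apply ℚ p.SplittingField ℂ]
    exact (eq_ratCast (algebraMap ℚ ℂ) q).symm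
  -- the Galois action on the roots
  have hmem_map : ∀ (g : p.SplittingField ≃ₐ[ℚ] p.SplittingField)
      (ν : p.rootSet p.SplittingField), g (ν : p.SplittingField) ∈ p.rootSet p.SplittingField := by
    intro g ν
    have h2 := (Polynomial.mem_rootSet.mp ν.2).2
    refine Polynomial.mem_rootSet.mpr ⟨hpne, ?_⟩
    have h3 := Polynomial.aeval_algHom_apply
      (g : p.SplittingField →ₐ[ℚ] p.SplittingField) (ν : p.SplittingField) p
    simpa [h2] using h3
  let rmap : (p.SplittingField ≃ₐ[ℚ] p.SplittingField) →
      (p.rootSet p.SplittingField ≃ p.rootSet p.SplittingField) := fun g =>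
    { toFun := fun ν => ⟨g ν, hmem_map g ν⟩
      invFun := fun ν => ⟨g.symm ν, hmem_map g.symm ν⟩
      left_inv := fun ν => Subtype.ext (g.symm_apply_apply ν)
      right_inv := fun ν => Subtype.ext (g.apply_symm_apply ν) }
  -- Galois invariance of the indicator
  have hinv : ∀ (g : p.SplittingField ≃ₐ[ℚ] p.SplittingField) (ν : p.rootSet p.SplittingField),
      c0 ((rmap g).symm ν) = c0 ν := by
    intro g
    have hz : ∀ k, k < d → ∑ ν : p.rootSet p.SplittingField,
        (c0 ((rmap g).symm ν) - c0 ν) * (ν : p.SplittingField) ^ (j0 + k) = 0 := by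
      intro k hk
      obtain ⟨q, hq⟩ := hwin (j0 + k) (Nat.le_add_right _ _) (by omega)
      have hgq : ∑ ν : p.rootSet p.SplittingField,
          g (c0 ν * (ν : p.SplittingField) ^ (j0 + k)) = algebraMap ℚ p.SplittingField q := by
        rw [← map_sum, hq]; exact g.commutes q
      have hterm : ∀ ν : p.rootSet p.SplittingField,
          g (c0 ν * (ν : p.SplittingField) ^ (j0 + k))
          = c0 ν * (g (ν : p.SplittingField)) ^ (j0 + k) := by
        intro ν; rw [map_mul, map_pow]; congr 1
        by_cases hν : ν ∈ T <;> simp [hc0def, hν]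
      simp_rw [hterm] at hgq
      have hre : ∑ ν : p.rootSet p.SplittingField,
          c0 ν * (g (ν : p.SplittingField)) ^ (j0 + k)
          = ∑ ν : p.rootSet p.SplittingField,
            c0 ((rmap g).symm ν) * (ν : p.SplittingField) ^ (j0 + k) := by
        rw [← Equiv.sum_comp (rmap g)
          (fun ν => c0 ((rmap g).symm ν) * (ν : p.SplittingField) ^ (j0 + k))]
        refine Finset.sum_congr rfl fun ν _ => ?_
        rw [Equiv.symm_apply_apply]
        rfl
      rw [hre] at hgq
      simp_rw [sub_mul]
      rw [Finset.sum_sub_distrib, hgq, hq, sub_self]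
    have hz' := vandermonde_window_eq_zero hcard hvinj hv0 hz
    intro ν
    exact sub_eq_zero.mp (hz' ν)
  have hmemiff : ∀ (g : p.SplittingField ≃ₐ[ℚ] p.SplittingField)
      (ν : p.rootSet p.SplittingField), ((rmap g).symm ν ∈ T) ↔ ν ∈ T := by
    intro g ν
    have h := hinv g ν
    constructor
    · intro h1; by_contra h2; simp [hc0def, h1, h2] at h
    · intro h2; by_contra h1; simp [hc0def, h1, h2] at h
  -- conclusion via transitivity of the Galois action
  by_cases hemp : S = ∅
  · exact Or.inl hemp
  right
  obtain ⟨σ0, hσ0⟩ := Set.nonempty_iff_ne_empty.mpr hemp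
  ext σ
  simp only [Set.mem_univ, iff_true]
  have hmp : ∀ ν : p.rootSet p.SplittingField,
      minpoly ℚ (ν : p.SplittingField) = p * Polynomial.C (p.leadingCoeff)⁻¹ := fun ν =>
    (minpoly.eq_of_irreducible hirr (Polynomial.mem_rootSet.mp ν.2).2).symm
  have horb : (E2 σ : p.SplittingField) ∈
      MulAction.orbit (p.SplittingField ≃ₐ[ℚ] p.SplittingField) (E2 σ0 : p.SplittingField) :=
    (Normal.minpoly_eq_iff_mem_orbit p.SplittingField (h := Polynomial.SplittingField.instNormal p)).mp ((hmp _).trans (hmp _).symm)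
  obtain ⟨g, hg⟩ := horb
  have hgT : (E2 σ ∈ T) ↔ (E2 σ0 ∈ T) := by
    have h := hmemiff g (rmap g (E2 σ0))
    rw [Equiv.symm_apply_apply] at h
    have heq : rmap g (E2 σ0) = E2 σ := Subtype.ext (by rw [← hg]; rfl)
    rw [heq] at h
    exact h.symm
  have hσ0T : E2 σ0 ∈ T := by
    rw [hTdef]
    exact Finset.mem_image_of_mem E2 (hSfin.mem_toFinset.mpr hσ0)
  have hσT : E2 σ ∈ T := hgT.mpr hσ0T
  rw [hTdef] at hσT
  obtain ⟨σ', hσ', heq⟩ := Finset.mem_image.mp hσT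
  have : σ' = σ := E2.injective heq
  rw [← this]
  exact hSfin.mem_toFinset.mp hσ'
end

section
/- Let λ be an algebraic number of degree d such that the set of field embeddings σ : ℚ(λ) → ℂ with |σ(λ)| < 1 is neither empty nor equal to the set of all embeddings, and let p be a prime. Then there exist a constant c_0 > 0, depending only on λ, and a threshold K_0 such that for every real K ≥ K_0 there are integers v_0, …, v_{d−1} with |v_i| ≤ K for all i such that, setting v := ∑_{i=0}^{d−1} p·v_i·λ^i, one has Σ_<(v λ^k) ∉ ℚ for every integer k with |k| ≤ c_0 K. -/
open scoped BigOperators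

set_option maxHeartbeats 1600000
set_option synthInstance.maxHeartbeats 400000

open Classical in
noncomputable def fLin (lam : ℂ) : Qlam lam →ₗ[ℚ] ℂ :=
  ∑ᶠ σ : (Qlam lam →ₐ[ℚ] ℂ),
    if ‖σ (lamGen lam)‖ < 1 then (σ.toLinearMap : Qlam lam →ₗ[ℚ] ℂ) else 0

lemma fLin_apply (lam : ℂ) [FiniteDimensional ℚ (Qlam lam)] (y : Qlam lam) :
    fLin lam y = ∑ σ : Qlam lam →ₐ[ℚ] ℂ,
      if ‖σ (lamGen lam)‖ < 1 then σ y else 0 := by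
  classical
  rw [fLin, finsum_eq_sum_of_fintype, LinearMap.sum_apply]
  refine Finset.sum_congr rfl fun σ _ => ?_
  split <;> simp

lemma SigmaLt_eq_fLin (lam : ℂ) [FiniteDimensional ℚ (Qlam lam)] (y : Qlam lam) :
    SigmaLt lam y = fLin lam y := by
  classical
  rw [SigmaLt, finsum_eq_sum_of_fintype, fLin_apply]

lemma fLin_not_all_rat (lam : ℂ) (halg : IsAlgebraic ℚ lam)
    (hlt : ∃ σ : Qlam lam →ₐ[ℚ] ℂ, ‖σ (lamGen lam)‖ < 1)
    (hnotall : ∃ σ : Qlam lam →ₐ[ℚ] ℂ, ¬ ‖σ (lamGen lam)‖ < 1) :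
    ∃ y : Qlam lam, ¬ ∃ q : ℚ, fLin lam y = algebraMap ℚ ℂ q := by
  classical
  haveI : FiniteDimensional ℚ (Qlam lam) :=
    IntermediateField.adjoin.finiteDimensional halg.isIntegral
  by_contra hcon
  push_neg at hcon
  choose f hf using hcon
  have hinj : Function.Injective (algebraMap ℚ ℂ) := (algebraMap ℚ ℂ).injective
  have hfadd : ∀ x y, f (x + y) = f x + f y := by
    intro x y
    apply hinj
    rw [← hf, map_add, map_add, hf, hf]
  have hfsmul : ∀ (c : ℚ) (x), f (c • x) = c * f x := by
    intro c x
    apply hinj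
    rw [← hf, map_smul, hf, map_mul]
    simp [Algebra.smul_def]
  let f' : Qlam lam →ₗ[ℚ] ℚ :=
    { toFun := f, map_add' := hfadd, map_smul' := hfsmul }
  have hnd := traceForm_nondegenerate ℚ (Qlam lam)
  set b := ((Algebra.traceForm ℚ (Qlam lam)).toDual hnd).symm f' with hb
  have htr : ∀ y, Algebra.trace ℚ (Qlam lam) (b * y) = f y := by
    intro y
    have h1 : Algebra.traceForm ℚ (Qlam lam) b y = f' y := by
      rw [hb]
      exact LinearMap.BilinForm.apply_toDual_symm_apply (hB := hnd) (f := f') (v := y)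
    rwa [Algebra.traceForm_apply] at h1
  have hsum : ∀ y : Qlam lam,
      ∑ σ : Qlam lam →ₐ[ℚ] ℂ,
        (if ‖σ (lamGen lam)‖ < 1 then σ y else 0)
      = ∑ σ : Qlam lam →ₐ[ℚ] ℂ, σ b * σ y := by
    intro y
    rw [← fLin_apply, hf y, ← htr y, trace_eq_sum_embeddings (E := ℂ)]
    exact Finset.sum_congr rfl fun σ _ => map_mul σ b y
  have li : LinearIndependent ℂ
      (fun σ : Qlam lam →ₐ[ℚ] ℂ => ((σ : Qlam lam →* ℂ) : Qlam lam → ℂ)) :=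
    (linearIndependent_monoidHom (Qlam lam) ℂ).comp
      (fun σ : Qlam lam →ₐ[ℚ] ℂ => (σ : Qlam lam →* ℂ))
      (fun a b h => AlgHom.ext fun x => DFunLike.ext_iff.1 h x)
  have key : ∑ σ : Qlam lam →ₐ[ℚ] ℂ,
      (σ b - if ‖σ (lamGen lam)‖ < 1 then 1 else 0) •
        ((σ : Qlam lam →* ℂ) : Qlam lam → ℂ) = 0 := by
    funext y
    simp only [Finset.sum_apply, Pi.smul_apply, smul_eq_mul, sub_mul, Pi.zero_apply,
      Finset.sum_sub_distrib]
    rw [sub_eq_zero]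
    have h2 : ∑ σ : Qlam lam →ₐ[ℚ] ℂ,
        (if ‖σ (lamGen lam)‖ < 1 then (1:ℂ) else 0) * σ y
        = ∑ σ : Qlam lam →ₐ[ℚ] ℂ,
        (if ‖σ (lamGen lam)‖ < 1 then σ y else 0) :=
      Finset.sum_congr rfl fun σ _ => by split <;> simp
    exact (hsum y).symm.trans h2.symm
  have hall := Fintype.linearIndependent_iff.mp li
    (fun σ => σ b - if ‖σ (lamGen lam)‖ < 1 then 1 else 0) key
  obtain ⟨σ1, hσ1⟩ := hlt
  obtain ⟨σ2, hσ2⟩ := hnotall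
  have e1 := hall σ1
  have e2 := hall σ2
  simp only [hσ1, if_true, sub_eq_zero] at e1
  simp only [hσ2, if_false, sub_zero] at e2
  have hb0 : b = 0 := by
    have : Function.Injective σ2 := σ2.toRingHom.injective
    exact this (by simpa using e2)
  rw [hb0, map_zero] at e1
  exact zero_ne_one e1

open Classical in
lemma card_box_filter_le {d : ℕ} (U : Submodule ℚ (Fin d → ℚ)) (hU : U ≠ ⊤) (N : ℤ) :
    ((Fintype.piFinset fun _ : Fin d => Finset.Icc (-N) N).filter
        fun v : Fin d → ℤ => ((fun i => ((v i : ℚ))) ∈ U)).card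
      ≤ (2 * N + 1).toNat ^ (d - 1) := by
  classical
  obtain ⟨g, hg0, hgmap⟩ :=
    U.exists_dual_map_eq_bot_of_lt_top (lt_top_iff_ne_top.mpr hU) inferInstance
  have hker : ∀ x ∈ U, g x = 0 := by
    intro x hx
    have : g x ∈ U.map g := Submodule.mem_map_of_mem hx
    rwa [hgmap, Submodule.mem_bot] at this
  have hexp : ∀ x : Fin d → ℚ, g x = ∑ i, x i * g (fun j => if i = j then 1 else 0) := by
    intro x
    conv_lhs => rw [pi_eq_sum_univ x, map_sum]
    exact Finset.sum_congr rfl fun i _ => by rw [map_smul, smul_eq_mul]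
  have hj : ∃ j, g (fun j' => if j = j' then 1 else 0) ≠ 0 := by
    by_contra h
    push_neg at h
    apply hg0
    refine LinearMap.ext fun x => ?_
    rw [hexp x]
    simp [h]
  obtain ⟨j, haj⟩ := hj
  set a : Fin d → ℚ := fun i => g (fun j' => if i = j' then 1 else 0) with ha
  set Box : Finset (Fin d → ℤ) := Fintype.piFinset fun _ : Fin d => Finset.Icc (-N) N with hBox
  set Bad : Finset (Fin d → ℤ) :=
    Box.filter (fun v : Fin d → ℤ => ((fun i => ((v i : ℚ))) ∈ U)) with hBad
  have hsplit : ∀ u : Fin d → ℤ, (∑ i, ((u i : ℚ)) * a i)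
      = (u j : ℚ) * a j + ∑ i ∈ Finset.univ.erase j, ((u i : ℚ)) * a i :=
    fun u => (Finset.add_sum_erase _ _ (Finset.mem_univ j)).symm
  have hinj : Set.InjOn (fun v : Fin d → ℤ => Function.update v j 0) Bad := by
    intro v hv w hw h
    have hvw : ∀ i, i ≠ j → v i = w i := by
      intro i hi
      have := congrFun h i
      simpa [Function.update_of_ne hi] using this
    have hgv : (∑ i, ((v i : ℚ)) * a i) = 0 := by
      rw [← hexp]; exact hker _ (Finset.mem_filter.mp hv).2
    have hgw : (∑ i, ((w i : ℚ)) * a i) = 0 := by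
      rw [← hexp]; exact hker _ (Finset.mem_filter.mp hw).2
    have hsame : ∑ i ∈ Finset.univ.erase j, ((v i : ℚ)) * a i
        = ∑ i ∈ Finset.univ.erase j, ((w i : ℚ)) * a i :=
      Finset.sum_congr rfl fun i hi => by rw [hvw i (Finset.ne_of_mem_erase hi)]
    have hjj : (v j : ℚ) * a j = (w j : ℚ) * a j := by
      have h1 := hsplit v; rw [hgv] at h1
      have h2 := hsplit w; rw [hgw] at h2
      rw [hsame] at h1
      linarith [h1, h2]
    have : (v j : ℚ) = (w j : ℚ) := mul_right_cancel₀ haj hjj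
    funext i
    by_cases hi : i = j
    · subst hi; exact_mod_cast this
    · exact hvw i hi
  have hmaps : ∀ v ∈ Bad, Function.update v j 0 ∈
      Fintype.piFinset (fun i => if i = j then ({0} : Finset ℤ) else Finset.Icc (-N) N) := by
    intro v hv
    rw [Fintype.mem_piFinset]
    intro i
    by_cases hi : i = j
    · subst hi; simp
    · rw [if_neg hi, Function.update_of_ne hi]
      exact Fintype.mem_piFinset.mp (Finset.mem_filter.mp hv).1 i
  calc Bad.card
      ≤ (Fintype.piFinset (fun i => if i = j then ({0} : Finset ℤ)
          else Finset.Icc (-N) N)).card :=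
        Finset.card_le_card_of_injOn _ hmaps hinj
    _ = ∏ i, (if i = j then ({0} : Finset ℤ) else Finset.Icc (-N) N).card :=
        Fintype.card_piFinset _
    _ = (2 * N + 1).toNat ^ (d - 1) := by
        rw [← Finset.mul_prod_erase _ _ (Finset.mem_univ j), if_pos rfl]
        rw [Finset.prod_congr rfl (fun i hi => by
          rw [if_neg (Finset.ne_of_mem_erase hi)])]
        rw [Finset.prod_const, Finset.card_erase_of_mem (Finset.mem_univ j),
          Finset.card_univ, Fintype.card_fin, Int.card_Icc]
        simp only [Finset.card_singleton, one_mul]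
        congr 2
        ring

/-- Let `lam` be algebraic of degree `d` such that the set of embeddings
`σ` with `|σ(lam)| < 1` is neither empty nor everything, and let `p` be a prime. Then
there are `c₀ > 0` (depending only on `lam`) and a threshold `K₀` such that for every
`K ≥ K₀` there are integers `v_0, …, v_{d-1}` with `|v_i| ≤ K` such that, for
`v = ∑ p v_i lam^i`, one has `Σ_<(v lam^k) ∉ ℚ` for every `|k| ≤ c₀ K`. -/
theorem exists_smallVector_sigmaLt_irrational
    (lam : ℂ) (halg : IsAlgebraic ℚ lam) (hne : lam ≠ 0)
    (hlt : ∃ σ : Qlam lam →ₐ[ℚ] ℂ, ‖σ (lamGen lam)‖ < 1)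
    (hnotall : ∃ σ : Qlam lam →ₐ[ℚ] ℂ, ¬ ‖σ (lamGen lam)‖ < 1)
    (p : ℕ) (hp : p.Prime) :
    ∃ c0 : ℝ, 0 < c0 ∧ ∃ K0 : ℝ, ∀ K : ℝ, K0 ≤ K →
      ∃ v : Fin (minpoly ℚ lam).natDegree → ℤ,
        (∀ i, |(v i : ℝ)| ≤ K) ∧
        ∀ k : ℤ, |(k : ℝ)| ≤ c0 * K →
          ¬ ∃ q : ℚ,
            SigmaLt lam
              ((∑ i : Fin (minpoly ℚ lam).natDegree,
                  (p : Qlam lam) * (v i : Qlam lam) * (lamGen lam) ^ (i : ℕ))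
                * (lamGen lam) ^ k) = (q : ℂ) := by
  classical
  have hint : IsIntegral ℚ lam := halg.isIntegral
  haveI : FiniteDimensional ℚ (Qlam lam) :=
    IntermediateField.adjoin.finiteDimensional hint
  set d := (minpoly ℚ lam).natDegree with hd
  have hd1 : 0 < d := minpoly.natDegree_pos hint
  set pb : PowerBasis ℚ (Qlam lam) := IntermediateField.adjoin.powerBasis hint with hpb
  have hbasis : ∀ i : Fin d, pb.basis i = (lamGen lam) ^ (i : ℕ) := by
    intro i
    exact pb.basis_eq_pow i
  let φ : (Fin d → ℚ) ≃ₗ[ℚ] Qlam lam := pb.basis.equivFun.symm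
  let W : Submodule ℚ (Qlam lam) :=
    Submodule.comap (fLin lam) (LinearMap.range (Algebra.linearMap ℚ ℂ))
  have hW : W ≠ ⊤ := by
    obtain ⟨y, hy⟩ := fLin_not_all_rat lam halg hlt hnotall
    intro htop
    refine hy ?_
    have hyW : y ∈ W := htop ▸ Submodule.mem_top
    obtain ⟨q, hq⟩ := hyW
    exact ⟨q, hq.symm⟩
  have hgen0 : (lamGen lam) ≠ 0 := by
    intro h
    apply hne
    exact congrArg Subtype.val h
  -- the linear maps
  let μ : ℤ → Qlam lam := fun k => (p : Qlam lam) * (lamGen lam) ^ k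
  have hμ : ∀ k, μ k ≠ 0 := fun k =>
    mul_ne_zero (Nat.cast_ne_zero.mpr hp.ne_zero) (zpow_ne_zero k hgen0)
  let L : ℤ → ((Fin d → ℚ) →ₗ[ℚ] Qlam lam) := fun k =>
    (LinearMap.mulLeft ℚ (μ k)).comp (φ : (Fin d → ℚ) →ₗ[ℚ] Qlam lam)
  let U : ℤ → Submodule ℚ (Fin d → ℚ) := fun k => Submodule.comap (L k) W
  have hU : ∀ k, U k ≠ ⊤ := by
    intro k htop
    apply hW
    rw [Submodule.eq_top_iff']
    intro y
    have hx : φ.symm ((μ k)⁻¹ * y) ∈ U k := htop ▸ Submodule.mem_top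
    have : (L k) (φ.symm ((μ k)⁻¹ * y)) = y := by
      simp only [L, LinearMap.comp_apply, LinearMap.mulLeft_apply,
        LinearEquiv.coe_coe, LinearEquiv.apply_symm_apply]
      exact mul_inv_cancel_left₀ (hμ k) y
    rw [Submodule.mem_comap, this] at hx
    exact hx
  refine ⟨1/2, by norm_num, 3, fun K hK => ?_⟩
  set N : ℤ := ⌊K⌋ with hN
  have hN3 : (3:ℤ) ≤ N := Int.le_floor.mpr (by exact_mod_cast hK)
  have hNK : (N:ℝ) ≤ K := Int.floor_le K
  set M : ℤ := ⌊K/2⌋ with hM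
  have hM0 : (0:ℤ) ≤ M := Int.le_floor.mpr (by push_cast; linarith)
  have hMN : M < N := by
    have h1 : (M:ℝ) ≤ K/2 := Int.floor_le _
    have h2 : K - 1 < (N:ℝ) := Int.sub_one_lt_floor K
    exact_mod_cast lt_of_le_of_lt h1 (by linarith : K/2 < (N:ℝ))
  set Box : Finset (Fin d → ℤ) := Fintype.piFinset fun _ : Fin d => Finset.Icc (-N) N with hBox
  set Bad : Finset (Fin d → ℤ) := (Finset.Icc (-M) M).biUnion
    (fun k => Box.filter fun v : Fin d → ℤ => ((fun i => ((v i : ℚ))) ∈ U k)) with hBadDef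
  have hcardBox : Box.card = (2*N+1).toNat ^ d := by
    rw [hBox, Fintype.card_piFinset]
    rw [Finset.prod_congr rfl (fun i _ => by rw [Int.card_Icc])]
    rw [Finset.prod_const, Finset.card_univ, Fintype.card_fin]
    congr 2
    ring
  have hcard : Bad.card < Box.card := by
    rw [hcardBox]
    have h2 : Bad.card ≤ (2*M+1).toNat * (2*N+1).toNat ^ (d-1) := by
      refine le_trans (Finset.card_biUnion_le) ?_
      refine le_trans (Finset.sum_le_sum fun k _ => card_box_filter_le (U k) (hU k) N) ?_
      rw [Finset.sum_const, Int.card_Icc, smul_eq_mul]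
      apply Nat.mul_le_mul_right
      apply le_of_eq
      congr 1
      ring
    have hc0 : 0 < (2*N+1).toNat := by omega
    have h3 : (2*M+1).toNat < (2*N+1).toNat := by omega
    calc Bad.card ≤ (2*M+1).toNat * (2*N+1).toNat ^ (d-1) := h2
      _ < (2*N+1).toNat * (2*N+1).toNat ^ (d-1) :=
          Nat.mul_lt_mul_of_lt_of_le h3 le_rfl (Nat.pow_pos hc0)
      _ = (2*N+1).toNat ^ d := by
          rw [← pow_succ']
          congr 1
          omega
  have hLapp : ∀ (k : ℤ) (x : Fin d → ℚ), L k x = μ k * (pb.basis.equivFun.symm x) :=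
    fun k x => rfl
  have hns : ¬ Box ⊆ Bad := fun hsub =>
    absurd (Finset.card_le_card hsub) (not_le.mpr hcard)
  obtain ⟨v, hvBox, hvBad⟩ := Finset.not_subset.mp hns
  refine ⟨v, ?_, ?_⟩
  · intro i
    have hvi := Fintype.mem_piFinset.mp hvBox i
    rw [Finset.mem_Icc] at hvi
    have habs : |(v i : ℝ)| ≤ (N:ℝ) := by
      rw [abs_le]
      constructor
      · have : (-N : ℝ) ≤ (v i : ℝ) := by exact_mod_cast hvi.1
        push_cast at this ⊢
        linarith [hNK]
      · exact_mod_cast hvi.2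
    exact habs.trans hNK
  · intro k hk
    rw [show (1/2 : ℝ) * K = K/2 by ring] at hk
    rw [abs_le] at hk
    have hkM : k ∈ Finset.Icc (-M) M := by
      rw [Finset.mem_Icc]
      constructor
      · have hmk : (-k : ℤ) ≤ M := Int.le_floor.mpr (by push_cast; linarith [hk.1])
        omega
      · exact Int.le_floor.mpr (by exact_mod_cast hk.2)
    rintro ⟨q, hq⟩
    have helt : (∑ i : Fin d, (p : Qlam lam) * (v i : Qlam lam) * (lamGen lam) ^ (i : ℕ))
        * (lamGen lam) ^ k = L k (fun i => ((v i : ℚ))) := by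
      rw [show L k (fun i => ((v i : ℚ))) = μ k * ∑ i : Fin d, ((v i : ℚ)) • pb.basis i from (hLapp k _).trans (congrArg _ (Module.Basis.equivFun_symm_apply _ _)), Finset.mul_sum, Finset.sum_mul]
      refine Finset.sum_congr rfl fun i _ => ?_
      rw [hbasis i, Algebra.smul_def, map_intCast (algebraMap ℚ (Qlam lam)) (v i)]
      show (p : Qlam lam) * (v i : Qlam lam) * (lamGen lam) ^ (i : ℕ) * (lamGen lam) ^ k
        = (p : Qlam lam) * (lamGen lam) ^ k * ((v i : Qlam lam) * (lamGen lam) ^ (i : ℕ))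
      ring
    have hmem : ((fun i => ((v i : ℚ))) ∈ U k) := by
      have hval : fLin lam (L k (fun i => ((v i : ℚ)))) = algebraMap ℚ ℂ q := by
        rw [← helt, ← SigmaLt_eq_fLin, hq]
        exact (eq_ratCast (algebraMap ℚ ℂ) q).symm
      exact Submodule.mem_comap.mpr (Submodule.mem_comap.mpr ⟨q, hval.symm⟩)
    exact hvBad (Finset.mem_biUnion.mpr ⟨k, hkM, Finset.mem_filter.mpr ⟨hvBox, hmem⟩⟩)
end

section
/- Let β be an algebraic number of degree d all of whose Galois conjugates have modulus > 1, and let K := ℚ(β). If v ∈ ℝ^{r_1} × ℂ^{r_2} satisfies ⟨v, D(β^j)⟩_< ∈ ℚ for every 0 ≤ j < d, then v lies in the image D(K) of the Minkowski embedding. -/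
open NumberField

open Classical in
/-- The bilinear pairing `⟨x, y⟩_< = ∑_real x_w y_w + 2 ∑_complex Re(x_w y_w)` on the
mixed space `ℝ^{r₁} × ℂ^{r₂}` of a number field. -/
noncomputable def mpair {K : Type*} [Field K] [NumberField K]
    (x y : mixedEmbedding.mixedSpace K) : ℝ :=
  (∑ w : {w : InfinitePlace K // w.IsReal}, x.1 w * y.1 w)
    + 2 * ∑ w : {w : InfinitePlace K // w.IsComplex}, (x.2 w * y.2 w).re

open Classical in
/-- The euclidean norm on the mixed space `ℝ^{r₁} × ℂ^{r₂} ≅ ℝ^d`. -/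
noncomputable def mnorm {K : Type*} [Field K] [NumberField K]
    (x : mixedEmbedding.mixedSpace K) : ℝ :=
  Real.sqrt ((∑ w : {w : InfinitePlace K // w.IsReal}, (x.1 w) ^ 2)
    + ∑ w : {w : InfinitePlace K // w.IsComplex}, ‖x.2 w‖ ^ 2)

section Aux

variable {K : Type*} [Field K] [NumberField K]

open NumberField.InfinitePlace

open Classical in
/-- The trace written as a sum over infinite places. -/
lemma trace_eq_mpair_sum (x : K) :
    ((Algebra.trace ℚ K x : ℚ) : ℝ)
      = (∑ w : {w : InfinitePlace K // w.IsReal}, embedding_of_isReal w.2 x)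
        + 2 * ∑ w : {w : InfinitePlace K // w.IsComplex}, (w.1.embedding x).re := by
  classical
  have h1 : ((Algebra.trace ℚ K x : ℚ) : ℂ) = ∑ σ : K →+* ℂ, σ x := by
    have := trace_eq_sum_embeddings (L := K) (E := ℂ) (K := ℚ) (x := x)
    rw [show algebraMap ℚ ℂ (Algebra.trace ℚ K x) = ((Algebra.trace ℚ K x : ℚ) : ℂ) by
      simp] at this
    rw [this]
    exact (Fintype.sum_equiv (RingHom.equivRatAlgHom K ℂ) _ _ (fun σ => rfl)).symm
  have h2 : ((Algebra.trace ℚ K x : ℚ) : ℝ) = ∑ σ : K →+* ℂ, (σ x).re := by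
    have := congrArg Complex.re h1
    simpa [Complex.re_sum] using this
  rw [h2]
  have h3 : ∑ σ : K →+* ℂ, (σ x).re
      = ∑ w : InfinitePlace K, (mult w : ℝ) * (w.embedding x).re := by
    rw [← Finset.sum_fiberwise Finset.univ (fun σ : K →+* ℂ => InfinitePlace.mk σ)
      (fun σ => (σ x).re)]
    refine Finset.sum_congr rfl fun w _ => ?_
    have hconst : ∀ σ ∈ Finset.univ.filter (fun σ : K →+* ℂ => InfinitePlace.mk σ = w),
        (σ x).re = (w.embedding x).re := by
      intro σ hσ
      rw [Finset.mem_filter] at hσ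
      rcases embedding_mk_eq σ with h | h
      · rw [← hσ.2, h]
      · rw [← hσ.2, h, ComplexEmbedding.conjugate_coe_eq, Complex.conj_re]
    rw [Finset.sum_congr rfl hconst, Finset.sum_const, card_filter_mk_eq, nsmul_eq_mul]
  rw [h3, ← Finset.sum_filter_add_sum_filter_not Finset.univ
    (fun w : InfinitePlace K => w.IsReal)]
  congr 1
  · rw [Finset.sum_subtype (Finset.univ.filter (fun w : InfinitePlace K => w.IsReal))
      (p := fun w : InfinitePlace K => w.IsReal) (by simp)
      (fun w : InfinitePlace K => (mult w : ℝ) * (w.embedding x).re)]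
    refine Finset.sum_congr rfl fun w _ => ?_
    rw [mult, if_pos w.2, Nat.cast_one, one_mul, ← embedding_of_isReal_apply w.2,
      Complex.ofReal_re]
  · rw [Finset.sum_subtype (Finset.univ.filter (fun w : InfinitePlace K => ¬ w.IsReal))
      (p := fun w : InfinitePlace K => w.IsComplex)
      (by simp [not_isReal_iff_isComplex])
      (fun w : InfinitePlace K => (mult w : ℝ) * (w.embedding x).re),
      Finset.mul_sum]
    refine Finset.sum_congr rfl fun w _ => ?_
    rw [mult, if_neg (not_isReal_iff_isComplex.mpr w.2), Nat.cast_ofNat]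

open Classical in
/-- The pairing of two mixed embeddings is the trace of the product. -/
lemma mpair_mixedEmbedding (u y : K) :
    mpair (mixedEmbedding K u) (mixedEmbedding K y)
      = ((Algebra.trace ℚ K (u * y) : ℚ) : ℝ) := by
  rw [trace_eq_mpair_sum]
  unfold mpair
  congr 1
  · refine Finset.sum_congr rfl fun w _ => ?_
    rw [mixedEmbedding.mixedEmbedding_apply_isReal,
      mixedEmbedding.mixedEmbedding_apply_isReal, ← map_mul]
  · congr 1
    refine Finset.sum_congr rfl fun w _ => ?_
    rw [mixedEmbedding.mixedEmbedding_apply_isComplex,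
      mixedEmbedding.mixedEmbedding_apply_isComplex, ← map_mul]

open Classical in
lemma mpair_sub_left (a b z : mixedEmbedding.mixedSpace K) :
    mpair (a - b) z = mpair a z - mpair b z := by
  simp only [mpair, Prod.fst_sub, Prod.snd_sub, Pi.sub_apply, sub_mul, Complex.sub_re,
    Finset.sum_sub_distrib]
  ring

open Classical in
/-- `mpair w ·` as a linear map. -/
noncomputable def mpairLin (w : mixedEmbedding.mixedSpace K) :
    mixedEmbedding.mixedSpace K →ₗ[ℝ] ℝ where
  toFun z := mpair w z
  map_add' a b := by
    simp only [mpair, Prod.fst_add, Prod.snd_add, Pi.add_apply, mul_add, Complex.add_re,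
      Finset.sum_add_distrib]
    ring
  map_smul' r a := by
    have hre : ∀ x y : ℂ, (x * ((r : ℂ) * y)).re = r * (x * y).re := by
      intro x y
      rw [mul_left_comm, Complex.mul_re, Complex.ofReal_re, Complex.ofReal_im, zero_mul, sub_zero]
    simp only [mpair, Prod.smul_fst, Prod.smul_snd, Pi.smul_apply, smul_eq_mul,
      Complex.real_smul, RingHom.id_apply, hre]
    simp only [show ∀ x y : ℝ, x * (r * y) = r * (x * y) from fun x y => by ring]
    rw [← Finset.mul_sum, ← Finset.mul_sum]
    ring

lemma mixedEmbedding_ratCast_mul (q : ℚ) (y : K) :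
    mixedEmbedding K ((q : K) * y) = (q : ℝ) • mixedEmbedding K y := by
  rw [map_mul]
  refine Prod.ext (funext fun w => ?_) (funext fun w => ?_)
  · simp [mixedEmbedding.mixedEmbedding_apply_isReal, map_ratCast]
  · simp [mixedEmbedding.mixedEmbedding_apply_isComplex, map_ratCast, Complex.real_smul]

/-- The mixed embeddings of the powers of a generator `β` span the mixed space over `ℝ`. -/
lemma span_mixedEmbedding_top (b : Module.Basis (Fin (Module.finrank ℚ K)) ℚ K) (β : K)
    (hb : ∀ i, b i = β ^ (i : ℕ)) :
    Submodule.span ℝ (Set.range fun i : Fin (Module.finrank ℚ K) =>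
      mixedEmbedding K (β ^ (i : ℕ))) = ⊤ := by
  set S := Submodule.span ℝ (Set.range fun i : Fin (Module.finrank ℚ K) =>
      mixedEmbedding K (β ^ (i : ℕ))) with hS
  have hmem : ∀ x : K, mixedEmbedding K x ∈ S := by
    intro x
    have hx : x ∈ Submodule.span ℚ (Set.range b) := by rw [b.span_eq]; trivial
    induction hx using Submodule.span_induction with
    | mem y hy =>
        obtain ⟨i, rfl⟩ := hy
        rw [hb]
        exact Submodule.subset_span ⟨i, rfl⟩
    | zero => rw [map_zero]; exact S.zero_mem
    | add y z _ _ hy hz => rw [map_add]; exact S.add_mem hy hz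
    | smul q y _ hy =>
        rw [Rat.smul_def, mixedEmbedding_ratCast_mul]
        exact S.smul_mem _ hy
  rw [eq_top_iff, ← (mixedEmbedding.latticeBasis K).span_eq]
  refine Submodule.span_le.mpr ?_
  rintro _ ⟨i, rfl⟩
  rw [mixedEmbedding.latticeBasis_apply]
  exact hmem _

end Aux

/-- Let `β` generate the number field `K = ℚ(β)` of degree `d`, with all
Galois conjugates of modulus `> 1`. If `v` in the mixed space satisfies
`⟨v, D(β^j)⟩_< ∈ ℚ` for all `0 ≤ j < d`, then `v` lies in the image of the Minkowski
embedding `D : K → ℝ^{r₁} × ℂ^{r₂}`. -/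
theorem mem_range_mixedEmbedding_of_pair_rational
    (K : Type*) [Field K] [NumberField K] (β : K)
    (hgen : Algebra.adjoin ℚ ({β} : Set K) = ⊤)
    (hconj : ∀ σ : K →+* ℂ, 1 < ‖σ β‖)
    (v : mixedEmbedding.mixedSpace K)
    (hv : ∀ j : ℕ, j < Module.finrank ℚ K →
      ∃ q : ℚ, mpair v (mixedEmbedding K (β ^ j)) = (q : ℝ)) :
    ∃ u : K, v = mixedEmbedding K u := by
  classical
  have hint : IsIntegral ℚ β := IsIntegral.of_finite ℚ β
  let pb : PowerBasis ℚ K := (Algebra.adjoin.powerBasis hint).map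
    ((Subalgebra.equivOfEq _ _ hgen).trans Subalgebra.topEquiv)
  have hgenpb : pb.gen = β := rfl
  have hdim : pb.dim = Module.finrank ℚ K := (pb.finrank).symm
  let b : Module.Basis (Fin (Module.finrank ℚ K)) ℚ K := pb.basis.reindex (finCongr hdim)
  have hb : ∀ i : Fin (Module.finrank ℚ K), b i = β ^ (i : ℕ) := by
    intro i
    rw [show b i = pb.basis ((finCongr hdim).symm i) from Module.Basis.reindex_apply _ _ _,
      pb.basis_eq_pow, hgenpb]
    congr 1
  have hq : ∀ i : Fin (Module.finrank ℚ K),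
      ∃ q : ℚ, mpair v (mixedEmbedding K (β ^ (i : ℕ))) = (q : ℝ) := fun i => hv i i.2
  choose q hq using hq
  have hB : (Algebra.traceForm ℚ K).Nondegenerate := traceForm_nondegenerate ℚ K
  let φ : K →ₗ[ℚ] ℚ := b.constr ℚ q
  let u : K := ((Algebra.traceForm ℚ K).toDual hB).symm φ
  have hu : ∀ x : K, Algebra.trace ℚ K (u * x) = φ x := by
    intro x
    rw [← Algebra.traceForm_apply]
    exact LinearMap.BilinForm.apply_toDual_symm_apply (B := Algebra.traceForm ℚ K)
      (hB := hB) φ x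
  refine ⟨u, ?_⟩
  set c : mixedEmbedding.mixedSpace K := v - mixedEmbedding K u with hc
  have hpair0 : ∀ i : Fin (Module.finrank ℚ K),
      mpair c (mixedEmbedding K (β ^ (i : ℕ))) = 0 := by
    intro i
    have h1 : mpair (mixedEmbedding K u) (mixedEmbedding K (β ^ (i : ℕ))) = (q i : ℝ) := by
      rw [mpair_mixedEmbedding, hu (β ^ (i : ℕ))]
      norm_cast
      rw [← hb i]
      exact b.constr_basis ℚ q i
    rw [hc, mpair_sub_left, hq i, h1, sub_self]
  have hall : mpairLin c = 0 := by
    apply LinearMap.ext_on (span_mixedEmbedding_top b β hb)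
    rintro _ ⟨i, rfl⟩
    simpa [mpairLin] using hpair0 i
  have hzero : ∀ z, mpair c z = 0 := by
    intro z
    have := congrArg (fun f => f z) hall
    simpa [mpairLin] using this
  have hc0 : c = 0 := by
    have key := hzero (c.1, fun j => (starRingEnd ℂ) (c.2 j))
    rw [mpair] at key
    simp only [Complex.mul_conj, Complex.ofReal_re] at key
    have hA : ∀ i ∈ Finset.univ, (0:ℝ) ≤ c.1 i * c.1 i := fun i _ => mul_self_nonneg _
    have hBs : ∀ i ∈ Finset.univ, (0:ℝ) ≤ Complex.normSq (c.2 i) :=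
      fun i _ => Complex.normSq_nonneg _
    have hA' : (0:ℝ) ≤ ∑ i : {w : InfinitePlace K // w.IsReal}, c.1 i * c.1 i :=
      Finset.sum_nonneg hA
    have hB' : (0:ℝ) ≤ ∑ i : {w : InfinitePlace K // w.IsComplex}, Complex.normSq (c.2 i) :=
      Finset.sum_nonneg hBs
    have hA0 : ∑ i : {w : InfinitePlace K // w.IsReal}, c.1 i * c.1 i = 0 := by linarith
    have hB0 : ∑ i : {w : InfinitePlace K // w.IsComplex}, Complex.normSq (c.2 i) = 0 := by
      linarith
    refine Prod.ext (funext fun i => ?_) (funext fun i => ?_)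
    · have := (Finset.sum_eq_zero_iff_of_nonneg hA).mp hA0 i (Finset.mem_univ i)
      exact mul_self_eq_zero.mp this
    · have := (Finset.sum_eq_zero_iff_of_nonneg hBs).mp hB0 i (Finset.mem_univ i)
      exact Complex.normSq_eq_zero.mp this
  have := sub_eq_zero.mp hc0
  exact this
end

section
/- Let f(X) = ∑_{j=0}^d a_j X^j ∈ ℤ[X] be irreducible with d ≥ 1 and a_0 ≠ 0, and set r := min{ j : gcd(a_0, a_1, …, a_j) = 1 } (this minimum exists since f, being irreducible, is primitive). For n ≥ 0 let G_n := ℤ[X]/I_n, where I_n := (f, X^n) is the ideal generated by f and X^n. Then G_n has exactly |a_0|^n elements, and as an abelian group G_n is generated by the images of 1, X, …, X^{r−1}. -/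
open Polynomial

theorem dvd_of_mem' (f : ℤ[X]) (ha0 : f.coeff 0 ≠ 0) (n : ℕ) (c : ℤ) :
    C c * X ^ n ∈ Ideal.span ({f, X ^ (n+1)} : Set ℤ[X]) ↔ f.coeff 0 ∣ c := by
  constructor
  · intro hmem
    rw [Ideal.mem_span_pair] at hmem
    obtain ⟨p, q, h⟩ := hmem
    have key : ∀ i, i ≤ n → ((p * f).coeff i = (C c * X ^ n).coeff i) := by
      intro i hi
      have h' := congrArg (fun g => Polynomial.coeff g i) h
      simpa [Polynomial.coeff_mul_X_pow', Nat.not_le.mpr (Nat.lt_succ_of_le hi)] using h'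
    have low : ∀ i, i < n → p.coeff i = 0 := by
      intro i hi
      induction i using Nat.strong_induction_on with
      | _ i ih =>
        have h1 := key i (le_of_lt hi)
        rw [Polynomial.coeff_mul] at h1
        rw [Finset.sum_eq_single_of_mem (i, 0) (by simp [Finset.mem_antidiagonal])] at h1
        · simp [Polynomial.coeff_X_pow, Nat.ne_of_lt hi] at h1
          rcases h1 with h1 | h1
          · exact h1
          · exact absurd h1 ha0
        · rintro ⟨a, b⟩ hab hne
          have hab' : a + b = i := Finset.HasAntidiagonal.mem_antidiagonal.mp hab
          have hlt : a < i := by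
            rcases Nat.lt_or_ge a i with h' | h'
            · exact h'
            · exfalso; apply hne
              have : a = i := le_antisymm (by omega) h'
              simp [this] at hab' ⊢; omega
          rw [ih a hlt (lt_trans hlt hi), zero_mul]
    have h2 := key n le_rfl
    rw [Polynomial.coeff_mul] at h2
    rw [Finset.sum_eq_single_of_mem (n, 0) (by simp [Finset.mem_antidiagonal])] at h2
    · simp at h2
      exact ⟨p.coeff n, by rw [← h2]; ring⟩
    · rintro ⟨a, b⟩ hab hne
      have hab' : a + b = n := Finset.HasAntidiagonal.mem_antidiagonal.mp hab
      have hlt : a < n := by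
        rcases Nat.lt_or_ge a n with h' | h'
        · exact h'
        · exfalso; apply hne
          have : a = n := le_antisymm (by omega) h'
          simp [this] at hab' ⊢; omega
      rw [low a hlt, zero_mul]
  · rintro ⟨t, hc⟩
    rw [Ideal.mem_span_pair]
    refine ⟨C t * X ^ n, -(C t * f.divX), ?_⟩
    have hf := Polynomial.X_mul_divX_add f
    subst hc
    rw [Polynomial.C_mul]
    linear_combination (C t * X ^ n) * hf.symm


theorem card_step (f : ℤ[X]) (ha0 : f.coeff 0 ≠ 0) (n : ℕ) :
    Nat.card (ℤ[X] ⧸ Ideal.span ({f, X ^ (n+1)} : Set ℤ[X]))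
      = (f.coeff 0).natAbs * Nat.card (ℤ[X] ⧸ Ideal.span ({f, X ^ n} : Set ℤ[X])) := by
  set I : Ideal ℤ[X] := Ideal.span {f, X ^ (n+1)} with hI
  set J : Ideal ℤ[X] := Ideal.span {f, X ^ n} with hJ
  have hle : I ≤ J := by
    rw [hI, Ideal.span_le]
    rintro x (rfl | rfl)
    · exact Ideal.subset_span (by simp)
    · simp only [SetLike.mem_coe]
      rw [Ideal.mem_span_pair]
      exact ⟨0, X, by ring⟩
  have hfI : f ∈ I := Ideal.subset_span (by simp)
  have hXJ : (X : ℤ[X]) ^ n ∈ J := Ideal.subset_span (by simp)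
  let π : (ℤ[X] ⧸ I) →+* (ℤ[X] ⧸ J) := Ideal.Quotient.factor hle
  have hπ : Function.Surjective π := by
    intro y
    obtain ⟨p, rfl⟩ := Ideal.Quotient.mk_surjective y
    exact ⟨Ideal.Quotient.mk I p, Ideal.Quotient.factor_mk hle p⟩
  let πa := π.toAddMonoidHom
  have hπa : Function.Surjective πa := hπ
  -- the map ψ : ℤ → ℤ[X]⧸I
  let ψ : ℤ →+ (ℤ[X] ⧸ I) := AddMonoidHom.mk'
    (fun c => Ideal.Quotient.mk I (C c * X ^ n))
    (fun a b => by simp only [Polynomial.C_add, add_mul, map_add])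
  have hrange : ψ.range = πa.ker := by
    ext x
    constructor
    · rintro ⟨c, rfl⟩
      have : πa (Ideal.Quotient.mk I (C c * X ^ n)) = Ideal.Quotient.mk J (C c * X ^ n) :=
        Ideal.Quotient.factor_mk hle _
      rw [AddMonoidHom.mem_ker]
      show πa (Ideal.Quotient.mk I (C c * X ^ n)) = 0
      rw [this, Ideal.Quotient.eq_zero_iff_mem]
      exact J.mul_mem_left _ hXJ
    · intro hx
      obtain ⟨p, rfl⟩ := Ideal.Quotient.mk_surjective x
      have hp : p ∈ J := by
        rw [← Ideal.Quotient.eq_zero_iff_mem]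
        rw [AddMonoidHom.mem_ker] at hx
        rw [← Ideal.Quotient.factor_mk hle p]; exact hx
      rw [hJ, Ideal.mem_span_pair] at hp
      obtain ⟨u, v, huv⟩ := hp
      refine ⟨v.coeff 0, ?_⟩
      show Ideal.Quotient.mk I (C (v.coeff 0) * X ^ n) = Ideal.Quotient.mk I p
      rw [Ideal.Quotient.eq]
      obtain ⟨w, hw⟩ : (X : ℤ[X]) ∣ (v - C (v.coeff 0)) := by
        rw [Polynomial.X_dvd_iff]; simp
      have : C (v.coeff 0) * X ^ n - p = (-u) * f + (-w) * X ^ (n+1) := by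
        linear_combination huv + (-(X ^ n)) * hw
      rw [this]
      exact I.add_mem (I.mul_mem_left _ hfI)
        (I.mul_mem_left _ (Ideal.subset_span (by simp)))
  have hker : ψ.ker = AddSubgroup.zmultiples (f.coeff 0) := by
    ext c
    rw [AddMonoidHom.mem_ker, AddSubgroup.mem_zmultiples_iff]
    show Ideal.Quotient.mk I (C c * X ^ n) = 0 ↔ _
    rw [Ideal.Quotient.eq_zero_iff_mem, hI, dvd_of_mem' f ha0]
    constructor
    · rintro ⟨k, rfl⟩; exact ⟨k, by simp [zsmul_eq_mul]; ring⟩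
    · rintro ⟨k, rfl⟩; exact ⟨k, by simp [zsmul_eq_mul]; ring⟩
  -- card of kernel
  have hK : Nat.card πa.ker = (f.coeff 0).natAbs := by
    rw [← hrange]
    have e1 := QuotientAddGroup.quotientKerEquivRange ψ
    rw [← Nat.card_congr e1.toEquiv, hker,
      Nat.card_congr (Int.quotientZMultiplesEquivZMod _).toEquiv, Nat.card_zmod]
  have e2 := QuotientAddGroup.quotientKerEquivOfSurjective πa hπa
  rw [AddSubgroup.card_eq_card_quotient_mul_card_addSubgroup πa.ker,
    Nat.card_congr e2.toEquiv, hK, mul_comm]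

theorem gcd_mem_ideal (T : Ideal ℤ) (s : Finset ℕ) (g : ℕ → ℤ)
    (h : ∀ i ∈ s, g i ∈ T) : s.gcd g ∈ T := by
  classical
  induction s using Finset.induction_on with
  | empty => simp
  | insert b s hx ih =>
    rw [Finset.gcd_insert]
    have h1 : g b ∈ T := h b (Finset.mem_insert_self b s)
    have h2 : s.gcd g ∈ T := ih fun i hi => h i (Finset.mem_insert_of_mem hi)
    have key : (gcd (g b) (s.gcd g) : ℤ) = g b * Int.gcdA (g b) (s.gcd g)
        + s.gcd g * Int.gcdB (g b) (s.gcd g) := by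
      rw [← Int.coe_gcd, Int.gcd_eq_gcd_ab]
    rw [key]
    exact T.add_mem (T.mul_mem_right _ h1) (T.mul_mem_right _ h2)

/-- The annihilator of an element of an abelian group, as an ideal of `ℤ`. -/
def annIdeal {G : Type*} [AddCommGroup G] (y : G) : Ideal ℤ where
  carrier := {c : ℤ | c • y = 0}
  add_mem' := fun {a b} ha hb => by
    simp only [Set.mem_setOf_eq] at *
    rw [add_zsmul, ha, hb, add_zero]
  zero_mem' := by simp only [Set.mem_setOf_eq, zero_zsmul]
  smul_mem' := fun c x hx => by
    simp only [Set.mem_setOf_eq, smul_eq_mul] at *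
    rw [mul_zsmul, hx, smul_zero]

theorem mem_annIdeal_iff {G : Type*} [AddCommGroup G] (y : G) (c : ℤ) :
    c ∈ annIdeal y ↔ c • y = 0 := Iff.rfl

theorem step_aux {G : Type*} [AddCommGroup G] (μ : ℕ → G) (a : ℕ → ℤ) (D r m : ℕ)
    (hr : (Finset.range (r + 1)).gcd a = 1)
    (ha : ∀ k, D < k → a k = 0)
    (hrel : ∀ s : ℕ, ∑ k ∈ Finset.range (D + 1), a k • μ (s + k) = 0)
    (hrm : r ≤ m)
    (hm : AddSubgroup.closure (μ '' Set.Iio r ∪ μ '' Set.Ici m) = ⊤) :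
    AddSubgroup.closure (μ '' Set.Iio r ∪ μ '' Set.Ici (m + 1)) = ⊤ := by
  set H : AddSubgroup G := AddSubgroup.closure (μ '' Set.Iio r ∪ μ '' Set.Ici (m + 1)) with hH
  let q : G →+ G ⧸ H := QuotientAddGroup.mk' H
  have hq0 : ∀ x, q x = 0 ↔ x ∈ H := fun x => QuotientAddGroup.eq_zero_iff x
  set y : G ⧸ H := q (μ m) with hy
  have hgen0 : ∀ i, i < r ∨ m + 1 ≤ i → q (μ i) = 0 := by
    intro i hi
    rw [hq0]
    refine AddSubgroup.subset_closure ?_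
    rcases hi with hi | hi
    · exact Or.inl ⟨i, hi, rfl⟩
    · exact Or.inr ⟨i, hi, rfl⟩
  have hdecomp : ∀ e : ℕ, ∃ c : ℤ, q (μ e) = c • y := by
    intro e
    have h1 : μ e ∈ AddSubgroup.closure (μ '' Set.Iio r ∪ μ '' Set.Ici m) := by
      rw [hm]; trivial
    have h2 : AddSubgroup.closure (μ '' Set.Iio r ∪ μ '' Set.Ici m)
        ≤ H ⊔ AddSubgroup.zmultiples (μ m) := by
      refine (AddSubgroup.closure_le _).mpr ?_
      rintro x (hx | ⟨i, hi, rfl⟩)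
      · exact SetLike.le_def.mp le_sup_left (AddSubgroup.subset_closure (Or.inl hx))
      · rcases eq_or_lt_of_le (Set.mem_Ici.mp hi) with rfl | hi'
        · exact SetLike.le_def.mp le_sup_right (AddSubgroup.mem_zmultiples _)
        · exact SetLike.le_def.mp le_sup_left
            (AddSubgroup.subset_closure (Or.inr ⟨i, hi', rfl⟩))
    obtain ⟨h, hh, z, hz, hsum⟩ := AddSubgroup.mem_sup.mp (h2 h1)
    obtain ⟨c, rfl⟩ := AddSubgroup.mem_zmultiples_iff.mp hz
    refine ⟨c, ?_⟩
    rw [← hsum, map_add, map_zsmul, ← hy, (hq0 h).mpr hh, zero_add]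
  have hTj : ∀ j, j ≤ r → a j ∈ annIdeal y := by
    intro j
    induction j using Nat.strong_induction_on with
    | _ j ih =>
      intro hjr
      have hjm : j ≤ m := le_trans hjr hrm
      rw [mem_annIdeal_iff]
      have h0 := congrArg q (hrel (m - j))
      rw [map_sum, map_zero] at h0
      simp only [map_zsmul] at h0
      have hs : ∑ k ∈ Finset.range (D + 1), a k • q (μ (m - j + k))
          = a j • q (μ (m - j + j)) := by
        refine Finset.sum_eq_single j ?_ ?_
        · intro k hk hkj
          rcases lt_or_gt_of_ne hkj with hlt | hgt
          · obtain ⟨c, hc⟩ := hdecomp (m - j + k)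
            rw [hc, smul_comm, (mem_annIdeal_iff y _).mp
              (ih k hlt (le_trans (le_of_lt hlt) hjr)), smul_zero]
          · rw [hgen0 (m - j + k) (Or.inr (by omega)), smul_zero]
        · intro hj
          rw [ha j (by simpa using hj), zero_zsmul]
      have hjj : m - j + j = m := by omega
      rw [hjj] at hs
      rw [← hy] at hs
      rw [← hs, h0]
  have h1T : (1 : ℤ) ∈ annIdeal y := by
    rw [← hr]
    exact gcd_mem_ideal _ _ _ fun i hi => hTj i (by rw [Finset.mem_range] at hi; omega)
  have hkey : μ m ∈ H := by
    have := (mem_annIdeal_iff y 1).mp h1T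
    rw [one_zsmul, hy, hq0] at this
    exact this
  rw [eq_top_iff, ← hm]
  refine (AddSubgroup.closure_le _).mpr ?_
  rintro x (hx | ⟨i, hi, rfl⟩)
  · exact AddSubgroup.subset_closure (Or.inl hx)
  · rcases eq_or_lt_of_le (Set.mem_Ici.mp hi) with rfl | hi'
    · exact hkey
    · exact AddSubgroup.subset_closure (Or.inr ⟨i, hi', rfl⟩)

theorem gen_abstract {G : Type*} [AddCommGroup G] (μ : ℕ → G) (a : ℕ → ℤ) (D r n : ℕ)
    (hr : (Finset.range (r + 1)).gcd a = 1)
    (ha : ∀ k, D < k → a k = 0)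
    (hrel : ∀ s : ℕ, ∑ k ∈ Finset.range (D + 1), a k • μ (s + k) = 0)
    (hall : AddSubgroup.closure (Set.range μ) = ⊤)
    (hvanish : ∀ i, n ≤ i → μ i = 0) :
    AddSubgroup.closure (μ '' Set.Iio r) = ⊤ := by
  have base : AddSubgroup.closure (μ '' Set.Iio r ∪ μ '' Set.Ici r) = ⊤ := by
    rw [← Set.image_union, Set.Iio_union_Ici, Set.image_univ, hall]
  have htop : ∀ m, r ≤ m → AddSubgroup.closure (μ '' Set.Iio r ∪ μ '' Set.Ici m) = ⊤ := by
    intro m hm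
    induction m, hm using Nat.le_induction with
    | base => exact base
    | succ m hm ih => exact step_aux μ a D r m hr ha hrel hm ih
  have hfin := htop (max r n) (le_max_left r n)
  have hle : AddSubgroup.closure (μ '' Set.Iio r ∪ μ '' Set.Ici (max r n))
      ≤ AddSubgroup.closure (μ '' Set.Iio r) := by
    refine (AddSubgroup.closure_le _).mpr ?_
    rintro x (hx | ⟨i, hi, rfl⟩)
    · exact AddSubgroup.subset_closure hx
    · rw [hvanish i (le_trans (le_max_right r n) hi)]
      exact AddSubgroup.zero_mem _
  exact eq_top_iff.mpr (hfin ▸ hle)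


theorem gen_aux (f : Polynomial ℤ) (n r : ℕ)
    (hr : (Finset.range (r + 1)).gcd f.coeff = 1) :
    AddSubgroup.closure
        ((fun i : ℕ =>
            Ideal.Quotient.mk (Ideal.span {f, Polynomial.X ^ n} : Ideal (Polynomial ℤ))
              (Polynomial.X ^ i)) ''
          Set.Iio r) = ⊤ := by
  set I : Ideal ℤ[X] := Ideal.span {f, X ^ n} with hI
  set μ : ℕ → ℤ[X] ⧸ I := fun i => Ideal.Quotient.mk I (X ^ i) with hμ
  have hfI : f ∈ I := Ideal.subset_span (by simp)
  have hsmul : ∀ (a : ℤ) (k : ℕ), Ideal.Quotient.mk I (C a * X ^ k) = a • μ k := by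
    intro a k
    have h1 : a • μ k = ((a : ℤ[X] ⧸ I)) * μ k := by rw [zsmul_eq_mul]
    rw [h1, hμ]
    show Ideal.Quotient.mk I (C a * X ^ k) = _ * Ideal.Quotient.mk I (X ^ k)
    rw [← map_intCast (Ideal.Quotient.mk I) a, ← map_mul]
    congr 1
  have hall : AddSubgroup.closure (Set.range μ) = ⊤ := by
    rw [eq_top_iff]
    rintro x -
    obtain ⟨p, rfl⟩ := Ideal.Quotient.mk_surjective x
    induction p using Polynomial.induction_on' with
    | add p q hp hq => rw [map_add]; exact AddSubgroup.add_mem _ hp hq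
    | monomial k c =>
        rw [← Polynomial.C_mul_X_pow_eq_monomial, hsmul]
        exact AddSubgroup.zsmul_mem _ (AddSubgroup.subset_closure (Set.mem_range_self k)) c
  have hvanish : ∀ i, n ≤ i → μ i = 0 := by
    intro i hi
    rw [hμ]
    show Ideal.Quotient.mk I (X ^ i) = 0
    rw [Ideal.Quotient.eq_zero_iff_mem]
    have hXi : (X : ℤ[X]) ^ i = X ^ (i - n) * X ^ n := by
      rw [← pow_add]; congr 1; omega
    rw [hXi]
    exact I.mul_mem_left _ (Ideal.subset_span (by simp))
  have hrel : ∀ s : ℕ, ∑ k ∈ Finset.range (f.natDegree + 1), f.coeff k • μ (s + k) = 0 := by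
    intro s
    have h0 : Ideal.Quotient.mk I (X ^ s * f) = 0 :=
      (Ideal.Quotient.eq_zero_iff_mem).mpr (I.mul_mem_left _ hfI)
    have hsum : X ^ s * f
        = ∑ k ∈ Finset.range (f.natDegree + 1), C (f.coeff k) * X ^ (s + k) := by
      conv_lhs => rw [Polynomial.as_sum_range' f (f.natDegree + 1) (Nat.lt_succ_self _)]
      rw [Finset.mul_sum]
      refine Finset.sum_congr rfl fun k _ => ?_
      rw [← Polynomial.C_mul_X_pow_eq_monomial, pow_add]; ring
    rw [hsum, map_sum] at h0
    rw [← h0]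
    exact Finset.sum_congr rfl fun k _ => (hsmul _ _).symm
  exact gen_abstract μ f.coeff f.natDegree r n hr
    (fun k hk => Polynomial.coeff_eq_zero_of_natDegree_lt hk) hrel hall hvanish

theorem gcd_range_eq_one (f : ℤ[X]) (hirr : Irreducible f) (hd : 1 ≤ f.natDegree) :
    (Finset.range (f.natDegree + 1)).gcd f.coeff = 1 := by
  have hprim : f.IsPrimitive := by
    rw [Polynomial.isPrimitive_iff_isUnit_of_C_dvd]
    intro c hdvd
    obtain ⟨g, hg⟩ := hdvd
    rcases hirr.isUnit_or_isUnit hg with hu | hu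
    · exact Polynomial.isUnit_C.mp hu
    · exfalso
      have h1 : g.natDegree = 0 := Polynomial.natDegree_eq_zero_of_isUnit hu
      have h2 : f.natDegree ≤ (C c).natDegree + g.natDegree := by
        rw [hg]; exact Polynomial.natDegree_mul_le
      rw [Polynomial.natDegree_C, h1] at h2
      omega
  have hcont : f.content = 1 := Polynomial.isPrimitive_iff_content_eq_one.mp hprim
  have hdvd : (Finset.range (f.natDegree + 1)).gcd f.coeff ∣ 1 := by
    rw [← hcont]
    unfold Polynomial.content
    refine Finset.dvd_gcd fun i hi => ?_
    exact Finset.gcd_dvd (Finset.mem_range.mpr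
      (Nat.lt_succ_of_le (Polynomial.le_natDegree_of_mem_supp i hi)))
  have hnorm := Finset.normalize_gcd (s := Finset.range (f.natDegree + 1)) (f := f.coeff)
  rw [← hnorm]
  exact normalize_eq_one.mpr (isUnit_of_dvd_one hdvd)

theorem card_quot (f : ℤ[X]) (ha0 : f.coeff 0 ≠ 0) (n : ℕ) :
    Nat.card (ℤ[X] ⧸ Ideal.span ({f, X ^ n} : Set ℤ[X])) = (f.coeff 0).natAbs ^ n := by
  induction n with
  | zero =>
    have htop : Ideal.span ({f, X ^ 0} : Set ℤ[X]) = ⊤ := by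
      rw [Ideal.eq_top_iff_one]
      exact Ideal.subset_span (by simp)
    have : Subsingleton (ℤ[X] ⧸ Ideal.span ({f, X ^ 0} : Set ℤ[X])) := by
      rw [htop]
      infer_instance
    have h1 : Nat.card (ℤ[X] ⧸ Ideal.span ({f, X ^ 0} : Set ℤ[X])) = 1 :=
      Nat.card_eq_one_iff_unique.mpr ⟨this, ⟨0⟩⟩
    rw [h1, pow_zero]
  | succ n ih =>
    rw [card_step f ha0 n, ih, pow_succ, mul_comm]

/-- Let `f = ∑ a_j X^j ∈ ℤ[X]` be irreducible with `d ≥ 1`, `a_0 ≠ 0`,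
and let `r` be minimal with `gcd(a_0, …, a_r) = 1`. Then `G_n = ℤ[X]/(f, X^n)` has
exactly `|a_0|^n` elements and is generated, as an abelian group, by the images of
`1, X, …, X^{r-1}`. -/
theorem card_and_generators_of_quotient_by_f_and_Xpow
    (f : Polynomial ℤ) (hirr : Irreducible f) (hd : 1 ≤ f.natDegree)
    (ha0 : f.coeff 0 ≠ 0) (n : ℕ) :
    Nat.card (Polynomial ℤ ⧸ (Ideal.span {f, Polynomial.X ^ n} : Ideal (Polynomial ℤ)))
        = (f.coeff 0).natAbs ^ n
    ∧ AddSubgroup.closure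
        ((fun i : ℕ =>
            Ideal.Quotient.mk (Ideal.span {f, Polynomial.X ^ n} : Ideal (Polynomial ℤ))
              (Polynomial.X ^ i)) ''
          Set.Iio (sInf {j : ℕ | (Finset.range (j + 1)).gcd f.coeff = 1})) = ⊤ := by
  constructor
  · exact card_quot f ha0 n
  · have hne : {j : ℕ | (Finset.range (j + 1)).gcd f.coeff = 1}.Nonempty :=
      ⟨f.natDegree, gcd_range_eq_one f hirr hd⟩
    have hr : (Finset.range (sInf {j : ℕ | (Finset.range (j + 1)).gcd f.coeff = 1} + 1)).gcd
        f.coeff = 1 := Nat.sInf_mem hne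
    exact gen_aux f n _ hr
end

section
/- Let β be an algebraic integer of degree d all of whose Galois conjugates have modulus > 1, let λ := β^{-1} and K := ℚ(β). The image D(ℤ[β]) of ℤ[β] under the Minkowski embedding is a lattice in ℝ^{r_1} × ℂ^{r_2} ≅ ℝ^d; let ℤ[β]^* := { x ∈ ℝ^{r_1} × ℂ^{r_2} : ⟨x, D(z)⟩_< ∈ ℤ for all z ∈ ℤ[β] } be its polar lattice with respect to ⟨·,·⟩_<. Then for every ε > 0 there exists η > 0 such that: if v ∈ ℝ^{r_1} × ℂ^{r_2} satisfies |e(⟨v, D(λ^j)⟩_<) − 1| ≤ η for all 0 ≤ j < d, then there exists w ∈ ℤ[β]^* with |v − w| ≤ ε. -/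
open NumberField

section Aux

open Real IntermediateField

lemma round_close_of_exp_close {δ : ℝ} (hδ : 0 < δ) (t : ℝ)
    (h : ‖Complex.exp (-(2 * Real.pi * Complex.I) * (t : ℂ)) - 1‖ ≤ min (4 * δ) (1 / 2)) :
    |t - round t| ≤ δ := by
  have harg : -(2 * Real.pi * Complex.I) * (t : ℂ) = ((-(2 * π * t) : ℝ) : ℂ) * Complex.I := by
    push_cast; ring
  rw [harg] at h
  have hre : (Complex.exp (((-(2 * π * t) : ℝ) : ℂ) * Complex.I) - 1).re
      = Real.cos (2 * π * t) - 1 := by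
    rw [Complex.sub_re, Complex.one_re, Complex.exp_ofReal_mul_I_re, Real.cos_neg]
  have him : |(Complex.exp (((-(2 * π * t) : ℝ) : ℂ) * Complex.I) - 1).im|
      = |Real.sin (2 * π * t)| := by
    rw [Complex.sub_im, Complex.one_im, sub_zero, Complex.exp_ofReal_mul_I_im, Real.sin_neg,
      abs_neg]
  set z := Complex.exp (((-(2 * π * t) : ℝ) : ℂ) * Complex.I) - 1 with hz
  have hreabs : |Real.cos (2 * π * t) - 1| ≤ min (4 * δ) (1 / 2) :=
    hre ▸ le_trans (Complex.abs_re_le_norm z) h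
  have himabs : |Real.sin (2 * π * t)| ≤ min (4 * δ) (1 / 2) :=
    him ▸ le_trans (Complex.abs_im_le_norm z) h
  set u := t - round t with hu
  have hu2 : |u| ≤ 1 / 2 := abs_sub_round t
  have ht : 2 * π * t = 2 * π * u + (round t : ℤ) * (2 * π) := by rw [hu]; push_cast; ring
  have hsin : Real.sin (2 * π * t) = Real.sin (2 * π * u) := by
    rw [ht, Real.sin_add_int_mul_two_pi]
  have hcos : Real.cos (2 * π * t) = Real.cos (2 * π * u) := by
    rw [ht, Real.cos_add_int_mul_two_pi]
  by_cases h14 : |u| ≤ 1 / 4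
  · -- small case
    have hx0 : (0:ℝ) ≤ 2 * π * |u| := by positivity
    have hx1 : 2 * π * |u| ≤ π / 2 := by nlinarith [pi_pos]
    have hjordan : 2 / π * (2 * π * |u|) ≤ Real.sin (2 * π * |u|) :=
      Real.mul_le_sin hx0 hx1
    have h4u : 4 * |u| ≤ Real.sin (2 * π * |u|) := by
      have hπ : π ≠ 0 := pi_ne_zero
      calc 4 * |u| = 2 / π * (2 * π * |u|) := by field_simp; ring
        _ ≤ _ := hjordan
    have habs : Real.sin (2 * π * |u|) = |Real.sin (2 * π * u)| := by
      rcases abs_cases u with ⟨h1, h2⟩ | ⟨h1, h2⟩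
      · rw [h1]
        exact (abs_of_nonneg (Real.sin_nonneg_of_nonneg_of_le_pi (by positivity)
          (by nlinarith [pi_pos]))).symm
      · rw [h1]
        have : Real.sin (2 * π * -u) = - Real.sin (2 * π * u) := by
          rw [show 2 * π * -u = -(2 * π * u) by ring, Real.sin_neg]
        rw [this]
        have hnp : Real.sin (2 * π * u) ≤ 0 :=
          Real.sin_nonpos_of_nonpos_of_neg_pi_le (by nlinarith [pi_pos]) (by nlinarith [pi_pos])
        rw [abs_of_nonpos hnp]
    have : 4 * |u| ≤ 4 * δ := by
      calc 4 * |u| ≤ |Real.sin (2 * π * u)| := habs ▸ h4u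
        _ = |Real.sin (2 * π * t)| := by rw [hsin]
        _ ≤ min (4 * δ) (1 / 2) := himabs
        _ ≤ 4 * δ := min_le_left _ _
    linarith
  · -- large case: contradiction
    exfalso
    push_neg at h14
    have hcosu : Real.cos (2 * π * u) = Real.cos (2 * π * |u|) := by
      rcases abs_cases u with ⟨h1, _⟩ | ⟨h1, _⟩
      · rw [h1]
      · rw [h1, show 2 * π * -u = -(2 * π * u) by ring, Real.cos_neg]
    have hcneg : Real.cos (2 * π * |u|) ≤ 0 :=
      Real.cos_nonpos_of_pi_div_two_le_of_le (by nlinarith [pi_pos]) (by nlinarith [pi_pos])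
    have h1 : |Real.cos (2 * π * t) - 1| ≥ 1 := by
      rw [hcos, hcosu]
      rw [abs_of_nonpos (by linarith)]
      linarith
    have := le_trans h1 hreabs
    have := min_le_right (4 * δ) (1/2 : ℝ)
    linarith

variable {K : Type*} [Field K] [NumberField K]

lemma mpair_comm (x y : mixedEmbedding.mixedSpace K) : mpair x y = mpair y x := by
  simp [mpair, mul_comm]

lemma mpair_add_left (x y z : mixedEmbedding.mixedSpace K) :
    mpair (x + y) z = mpair x z + mpair y z := by
  simp [mpair, add_mul, Finset.sum_add_distrib]
  ring

lemma mpair_smul_left (r : ℝ) (x z : mixedEmbedding.mixedSpace K) :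
    mpair (r • x) z = r * mpair x z := by
  simp [mpair, Finset.mul_sum, Complex.real_smul, mul_assoc, mul_add, mul_sub,
    Finset.sum_sub_distrib]
  congr 1 <;> exact Finset.sum_congr rfl fun w _ => by ring

open Classical in
noncomputable def mpairL {K : Type*} [Field K] [NumberField K] :
    mixedEmbedding.mixedSpace K →ₗ[ℝ] mixedEmbedding.mixedSpace K →ₗ[ℝ] ℝ :=
  LinearMap.mk₂ ℝ mpair mpair_add_left mpair_smul_left
    (fun x y z => by rw [mpair_comm, mpair_add_left, mpair_comm x y, mpair_comm x z])
    (fun r x y => by rw [mpair_comm, mpair_smul_left, mpair_comm x y, smul_eq_mul])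

@[simp] lemma mpairL_apply (x y : mixedEmbedding.mixedSpace K) : mpairL x y = mpair x y := rfl

open Classical in
noncomputable def mEuc (K : Type*) [Field K] [NumberField K] :
    mixedEmbedding.mixedSpace K ≃ₗ[ℝ]
      WithLp 2 ((PiLp 2 fun _ : {w : InfinitePlace K // w.IsReal} => ℝ)
        × (PiLp 2 fun _ : {w : InfinitePlace K // w.IsComplex} => ℂ)) :=
  LinearEquiv.trans
    (LinearEquiv.prodCongr
      (WithLp.linearEquiv 2 ℝ ({w : InfinitePlace K // w.IsReal} → ℝ)).symm
      (WithLp.linearEquiv 2 ℝ ({w : InfinitePlace K // w.IsComplex} → ℂ)).symm)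
    (WithLp.linearEquiv 2 ℝ ((PiLp 2 fun _ : {w : InfinitePlace K // w.IsReal} => ℝ)
        × (PiLp 2 fun _ : {w : InfinitePlace K // w.IsComplex} => ℂ))).symm

open Classical in
lemma mnorm_eq_norm (x : mixedEmbedding.mixedSpace K) : mnorm x = ‖mEuc K x‖ := by
  classical
  rw [WithLp.prod_norm_eq_of_L2]
  have h1 : ((mEuc K x).fst : PiLp 2 fun _ : {w : InfinitePlace K // w.IsReal} => ℝ)
      = (WithLp.equiv 2 _).symm x.1 := rfl
  have h2 : ((mEuc K x).snd : PiLp 2 fun _ : {w : InfinitePlace K // w.IsComplex} => ℂ)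
      = (WithLp.equiv 2 _).symm x.2 := rfl
  rw [h1, h2, PiLp.norm_eq_of_L2, PiLp.norm_eq_of_L2]
  rw [Real.sq_sqrt (by positivity), Real.sq_sqrt (by positivity)]
  unfold mnorm
  congr 1
  have e1 : ∑ i : {w : InfinitePlace K // w.IsReal},
        ‖(WithLp.equiv 2 ({w : InfinitePlace K // w.IsReal} → ℝ)).symm x.1 i‖ ^ 2
      = ∑ w : {w : InfinitePlace K // w.IsReal}, (x.1 w) ^ 2 :=
    Finset.sum_congr rfl fun w _ => by
      rw [show ((WithLp.equiv 2 ({w : InfinitePlace K // w.IsReal} → ℝ)).symm x.1) w = x.1 w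
        from rfl, Real.norm_eq_abs, sq_abs]
  have e2 : ∑ i : {w : InfinitePlace K // w.IsComplex},
        ‖(WithLp.equiv 2 ({w : InfinitePlace K // w.IsComplex} → ℂ)).symm x.2 i‖ ^ 2
      = ∑ w : {w : InfinitePlace K // w.IsComplex}, ‖x.2 w‖ ^ 2 :=
    Finset.sum_congr rfl fun w _ => by
      rw [show ((WithLp.equiv 2 ({w : InfinitePlace K // w.IsComplex} → ℂ)).symm x.2) w = x.2 w
        from rfl]
  rw [e1, e2]

lemma mnorm_nonneg (x : mixedEmbedding.mixedSpace K) : 0 ≤ mnorm x := Real.sqrt_nonneg _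

lemma beta_ne_zero {b : K} (hconj : ∀ σ : K →+* ℂ, 1 < ‖σ b‖) : b ≠ 0 := by
  intro h
  obtain ⟨σ⟩ : Nonempty (K →+* ℂ) := inferInstance
  have := hconj σ
  rw [h, map_zero, norm_zero] at this
  norm_num at this

lemma adjoin_inv_eq_top {b : K} (hb : b ≠ 0)
    (hgen : Algebra.adjoin ℚ ({b} : Set K) = ⊤) : ℚ⟮b⁻¹⟯ = ⊤ := by
  have hbint : IsIntegral ℚ b := Algebra.IsIntegral.isIntegral b
  have hbtop : ℚ⟮b⟯ = ⊤ := by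
    apply IntermediateField.toSubalgebra_injective
    rw [IntermediateField.adjoin_simple_toSubalgebra_of_isAlgebraic hbint.isAlgebraic, hgen,
      IntermediateField.top_toSubalgebra]
  refine le_antisymm le_top ?_
  rw [← hbtop]
  rw [IntermediateField.adjoin_le_iff]
  intro x hx
  rw [Set.mem_singleton_iff] at hx
  subst hx
  have h1 := IntermediateField.mem_adjoin_simple_self ℚ x⁻¹
  simpa using IntermediateField.inv_mem ℚ⟮x⁻¹⟯ h1

/-- A power basis of `K` with generator `λ = b⁻¹`. -/
noncomputable def lamPB {b : K} (hb : b ≠ 0)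
    (hgen : Algebra.adjoin ℚ ({b} : Set K) = ⊤) : PowerBasis ℚ K :=
  (IntermediateField.adjoin.powerBasis (Algebra.IsIntegral.isIntegral b⁻¹ : IsIntegral ℚ b⁻¹)).map
    ((IntermediateField.equivOfEq (adjoin_inv_eq_top hb hgen)).trans IntermediateField.topEquiv)

lemma lamPB_gen {b : K} (hb : b ≠ 0) (hgen : Algebra.adjoin ℚ ({b} : Set K) = ⊤) :
    (lamPB hb hgen).gen = b⁻¹ := by
  simp [lamPB, IntermediateField.adjoin.powerBasis_gen]

lemma lamPB_dim {b : K} (hb : b ≠ 0) (hgen : Algebra.adjoin ℚ ({b} : Set K) = ⊤) :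
    (lamPB hb hgen).dim = Module.finrank ℚ K :=
  ((lamPB hb hgen).finrank).symm

lemma lamPB_basis {b : K} (hb : b ≠ 0) (hgen : Algebra.adjoin ℚ ({b} : Set K) = ⊤)
    (i : Fin (lamPB hb hgen).dim) :
    (lamPB hb hgen).basis i = b⁻¹ ^ (i : ℕ) := by
  rw [(lamPB hb hgen).basis_eq_pow, lamPB_gen]

lemma adjoin_simple_eq_top {b : K} (hgen : Algebra.adjoin ℚ ({b} : Set K) = ⊤) :
    ℚ⟮b⟯ = ⊤ := by
  apply IntermediateField.toSubalgebra_injective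
  rw [IntermediateField.adjoin_simple_toSubalgebra_of_isAlgebraic
    (Algebra.IsIntegral.isIntegral b).isAlgebraic, hgen, IntermediateField.top_toSubalgebra]

lemma minpoly_int_natDegree {b : K} (hint : IsIntegral ℤ b)
    (hgen : Algebra.adjoin ℚ ({b} : Set K) = ⊤) :
    (minpoly ℤ b).natDegree = Module.finrank ℚ K := by
  have h1 : minpoly ℚ b = (minpoly ℤ b).map (algebraMap ℤ ℚ) :=
    minpoly.isIntegrallyClosed_eq_field_fractions ℚ K hint
  have h2 := IntermediateField.adjoin.finrank (Algebra.IsIntegral.isIntegral b : IsIntegral ℚ b)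
  rw [adjoin_simple_eq_top hgen] at h2
  rw [IntermediateField.finrank_top'] at h2
  rw [h1, Polynomial.natDegree_map_eq_of_injective
    (algebraMap ℤ ℚ).injective_int] at h2
  exact h2.symm

lemma adjoin_int_mem_span {b : K} (hb : b ≠ 0) (hint : IsIntegral ℤ b)
    (hgen : Algebra.adjoin ℚ ({b} : Set K) = ⊤) :
    ∀ z ∈ Algebra.adjoin ℤ ({b} : Set K),
      z ∈ Submodule.span ℤ (Set.range fun j : Fin (lamPB hb hgen).dim => b⁻¹ ^ (j : ℕ)) := by
  set n := (lamPB hb hgen).dim with hn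
  set M := Submodule.span ℤ (Set.range fun j : Fin n => b⁻¹ ^ (j : ℕ)) with hM
  have hnpos : 0 < n := (lamPB hb hgen).dim_pos
  have hmem : ∀ j, j < n → b⁻¹ ^ j ∈ M := fun j hj =>
    Submodule.subset_span ⟨⟨j, hj⟩, rfl⟩
  have hdeg : (minpoly ℤ b).natDegree = n := by
    rw [minpoly_int_natDegree hint hgen, hn, lamPB_dim]
  -- b ∈ M
  have hbinv : b * b⁻¹ = 1 := mul_inv_cancel₀ hb
  have hbM : b ∈ M := by
    have haev : (Polynomial.aeval b) (minpoly ℤ b) = 0 := minpoly.aeval ℤ b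
    rw [Polynomial.aeval_eq_sum_range, Finset.sum_range_succ,
      (minpoly.monic hint).coeff_natDegree, one_smul, hdeg] at haev
    have hbn : b ^ n = -∑ i ∈ Finset.range n, (minpoly ℤ b).coeff i • b ^ i :=
      eq_neg_of_add_eq_zero_right haev
    have key : ∀ i, i < n → b ^ i * b⁻¹ ^ (n - 1) = b⁻¹ ^ (n - 1 - i) := by
      intro i hi
      have h4 : b⁻¹ ^ (n - 1) = b⁻¹ ^ (n - 1 - i) * b⁻¹ ^ i := by
        rw [← pow_add]; congr 1; omega
      calc b ^ i * b⁻¹ ^ (n - 1) = (b ^ i * b⁻¹ ^ i) * b⁻¹ ^ (n - 1 - i) := by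
            rw [h4]
            generalize b⁻¹ ^ (n - 1 - i) = p
            generalize b⁻¹ ^ i = q
            ring
        _ = b⁻¹ ^ (n - 1 - i) := by rw [← mul_pow, hbinv, one_pow, one_mul]
    have hbb : b = b ^ n * b⁻¹ ^ (n - 1) := by
      have h5 : b ^ n = b * b ^ (n - 1) := by
        conv_lhs => rw [show n = (n - 1) + 1 by omega]
        rw [pow_succ, mul_comm]
      rw [h5, mul_assoc, ← mul_pow, hbinv, one_pow, mul_one]
    have hb_eq : b = ∑ i ∈ Finset.range n, (-(minpoly ℤ b).coeff i) • b⁻¹ ^ (n - 1 - i) := by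
      calc b = b ^ n * b⁻¹ ^ (n - 1) := hbb
        _ = ∑ i ∈ Finset.range n, (-(minpoly ℤ b).coeff i) • (b ^ i * b⁻¹ ^ (n - 1)) := by
            rw [hbn, neg_mul, Finset.sum_mul]
            rw [← Finset.sum_neg_distrib]
            exact Finset.sum_congr rfl fun i hi => by rw [smul_mul_assoc, ← neg_smul]
        _ = ∑ i ∈ Finset.range n, (-(minpoly ℤ b).coeff i) • b⁻¹ ^ (n - 1 - i) :=
            Finset.sum_congr rfl fun i hi => by rw [key i (Finset.mem_range.mp hi)]
    rw [hb_eq]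
    exact Submodule.sum_mem _ fun i hi => Submodule.smul_mem _ _ (hmem _ (by omega))
  -- multiplication by b preserves M
  have hmul : ∀ x, x ∈ M → b * x ∈ M := by
    intro x hx
    induction hx using Submodule.span_induction with
    | mem y hy =>
      obtain ⟨j, rfl⟩ := hy
      show b * b⁻¹ ^ (j : ℕ) ∈ M
      rcases Nat.eq_zero_or_pos (j : ℕ) with h0 | hpos
      · rw [h0, pow_zero, mul_one]; exact hbM
      · obtain ⟨k, hk⟩ : ∃ k, (j : ℕ) = k + 1 := ⟨(j : ℕ) - 1, by omega⟩
        have : b * b⁻¹ ^ ((j : ℕ)) = b⁻¹ ^ k := by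
          rw [hk, pow_succ]
          calc b * (b⁻¹ ^ k * b⁻¹) = (b * b⁻¹) * b⁻¹ ^ k := by ring
            _ = b⁻¹ ^ k := by rw [hbinv, one_mul]
        rw [this]
        exact hmem k (by have := j.isLt; omega)
    | zero => rw [mul_zero]; exact zero_mem M
    | add y z _ _ hy hz => rw [mul_add]; exact add_mem hy hz
    | smul c y _ hy => rw [mul_smul_comm]; exact Submodule.smul_mem _ _ hy
  have hpow : ∀ i : ℕ, b ^ i ∈ M := by
    intro i
    induction i with
    | zero => rw [pow_zero, ← pow_zero b⁻¹]; exact hmem 0 hnpos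
    | succ k ih => rw [pow_succ, mul_comm]; exact hmul _ ih
  intro z hz
  rw [Algebra.adjoin_singleton_eq_range_aeval] at hz
  obtain ⟨q, hq⟩ := hz
  have hq' : (Polynomial.aeval b) q = z := hq
  rw [← hq', Polynomial.aeval_eq_sum_range]
  exact Submodule.sum_mem _ fun i _ => Submodule.smul_mem _ _ (hpow i)

end Aux

/-- Let `β` be an algebraic integer generating `K = ℚ(β)` of degree `d`,
with all Galois conjugates of modulus `> 1`, and `λ = β⁻¹`. For every `ε > 0` there is
`η > 0` such that: if `v` in the mixed space satisfies `|e(⟨v, D(λ^j)⟩_<) − 1| ≤ η` for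
all `0 ≤ j < d`, then there is `w` in the polar lattice `ℤ[β]^*` (i.e. with
`⟨w, D(z)⟩_< ∈ ℤ` for all `z ∈ ℤ[β]`) with `|v − w| ≤ ε` in the euclidean norm. -/
theorem exists_polarLattice_approx_of_char_near_one
    (K : Type*) [Field K] [NumberField K] (β : K)
    (hint : IsIntegral ℤ β)
    (hgen : Algebra.adjoin ℚ ({β} : Set K) = ⊤)
    (hconj : ∀ σ : K →+* ℂ, 1 < ‖σ β‖) :
    ∀ ε : ℝ, 0 < ε → ∃ η : ℝ, 0 < η ∧
      ∀ v : mixedEmbedding.mixedSpace K,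
        (∀ j : ℕ, j < Module.finrank ℚ K →
          ‖Complex.exp (-(2 * Real.pi * Complex.I) *
              (mpair v (mixedEmbedding K (β⁻¹ ^ j)) : ℂ)) - 1‖ ≤ η) →
        ∃ w : mixedEmbedding.mixedSpace K,
          (∀ z ∈ Algebra.adjoin ℤ ({β} : Set K),
            ∃ n : ℤ, mpair w (mixedEmbedding K z) = (n : ℝ)) ∧
          mnorm (v - w) ≤ ε := by
  classical
  intro ε hε
  have hb : β ≠ 0 := beta_ne_zero hconj
  set pb := lamPB hb hgen with hpb
  set n := pb.dim with hn
  have hDq : ∀ (q : ℚ) (x : K),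
      mixedEmbedding K (q • x) = (q : ℝ) • mixedEmbedding K x := by
    intro q x
    refine Prod.ext (funext fun w => ?_) (funext fun w => ?_)
    · simp only [NumberField.mixedEmbedding.mixedEmbedding_apply_isReal, Prod.smul_fst,
        Pi.smul_apply, smul_eq_mul]
      rw [Rat.smul_def, map_mul, map_ratCast]
    · simp only [NumberField.mixedEmbedding.mixedEmbedding_apply_isComplex, Prod.smul_snd,
        Pi.smul_apply]
      rw [Rat.smul_def, map_mul, map_ratCast, Complex.real_smul, Complex.ofReal_ratCast]
  have hspanR : Submodule.span ℝ
      (Set.range fun j : Fin n => mixedEmbedding K (β⁻¹ ^ (j : ℕ))) = ⊤ := by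
    rw [eq_top_iff, ← (mixedEmbedding.latticeBasis K).span_eq, Submodule.span_le]
    rintro _ ⟨i, rfl⟩
    rw [mixedEmbedding.latticeBasis_apply]
    have hmem : (integralBasis K i : K) ∈ Submodule.span ℚ (Set.range pb.basis) := by
      rw [pb.basis.span_eq]; trivial
    obtain ⟨c, hc⟩ := (Submodule.mem_span_range_iff_exists_fun ℚ).mp hmem
    rw [← hc, map_sum]
    apply Submodule.sum_mem
    intro j _
    have hbasis : pb.basis j = β⁻¹ ^ (j : ℕ) := lamPB_basis hb hgen j
    rw [hbasis, hDq]
    exact Submodule.smul_mem _ _ (Submodule.subset_span ⟨j, rfl⟩)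
  set T : mixedEmbedding.mixedSpace K →ₗ[ℝ] (Fin n → ℝ) :=
    LinearMap.pi (fun j : Fin n => mpairL.flip (mixedEmbedding K (β⁻¹ ^ (j : ℕ)))) with hTdef
  have hT : ∀ x (j : Fin n), T x j = mpair x (mixedEmbedding K (β⁻¹ ^ (j : ℕ))) := fun x j => rfl
  have hTinj : Function.Injective T := by
    rw [← LinearMap.ker_eq_bot, Submodule.eq_bot_iff]
    intro x hx
    rw [LinearMap.mem_ker] at hx
    have hall : ∀ y : mixedEmbedding.mixedSpace K, mpair x y = 0 := by
      intro y
      have hy : y ∈ Submodule.span ℝ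
          (Set.range fun j : Fin n => mixedEmbedding K (β⁻¹ ^ (j : ℕ))) := by
        rw [hspanR]; trivial
      have hle : Submodule.span ℝ
          (Set.range fun j : Fin n => mixedEmbedding K (β⁻¹ ^ (j : ℕ)))
          ≤ LinearMap.ker (mpairL x) := by
        rw [Submodule.span_le]
        rintro _ ⟨j, rfl⟩
        have h0 : T x j = 0 := by rw [hx]; rfl
        rw [hT] at h0
        simpa [LinearMap.mem_ker] using h0
      have := hle hy
      rwa [LinearMap.mem_ker, mpairL_apply] at this
    have h1 := hall (x.1, fun w => (starRingEnd ℂ) (x.2 w))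
    simp only [mpair] at h1
    have hre : ∀ w : {w : InfinitePlace K // w.IsComplex},
        (x.2 w * (starRingEnd ℂ) (x.2 w)).re = Complex.normSq (x.2 w) := fun w => by
      rw [Complex.mul_conj, Complex.ofReal_re]
    rw [Finset.sum_congr rfl (fun w _ => hre w)] at h1
    have hA : (0:ℝ) ≤ ∑ w : {w : InfinitePlace K // w.IsReal}, x.1 w * x.1 w :=
      Finset.sum_nonneg fun w _ => mul_self_nonneg _
    have hB : (0:ℝ) ≤ ∑ w : {w : InfinitePlace K // w.IsComplex}, Complex.normSq (x.2 w) :=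
      Finset.sum_nonneg fun w _ => Complex.normSq_nonneg _
    have hA0 : ∑ w : {w : InfinitePlace K // w.IsReal}, x.1 w * x.1 w = 0 := by linarith
    have hB0 : ∑ w : {w : InfinitePlace K // w.IsComplex}, Complex.normSq (x.2 w) = 0 := by
      linarith
    refine Prod.ext (funext fun w => ?_) (funext fun w => ?_)
    · have := (Finset.sum_eq_zero_iff_of_nonneg
        (fun w _ => mul_self_nonneg (x.1 w))).mp hA0 w (Finset.mem_univ w)
      simpa [mul_self_eq_zero] using this
    · have := (Finset.sum_eq_zero_iff_of_nonneg
        (fun w _ => Complex.normSq_nonneg (x.2 w))).mp hB0 w (Finset.mem_univ w)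
      simpa [Complex.normSq_eq_zero] using this
  have hrank : Module.finrank ℝ (mixedEmbedding.mixedSpace K) = n := by
    rw [mixedEmbedding.finrank, hn, lamPB_dim]
  have hTsurj : Function.Surjective T := by
    rw [← LinearMap.range_eq_top]
    apply Submodule.eq_top_of_finrank_eq
    rw [LinearMap.finrank_range_of_inj hTinj, hrank, Module.finrank_pi, Fintype.card_fin]
  choose m hm using fun j : Fin n => hTsurj (Pi.single j 1)
  set C := ∑ j : Fin n, mnorm (m j) with hC
  have hC0 : 0 ≤ C := Finset.sum_nonneg fun j _ => mnorm_nonneg _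
  set δ := ε / (C + 1) with hδdef
  have hδ : 0 < δ := div_pos hε (by linarith)
  refine ⟨min (4 * δ) (1 / 2), lt_min (by linarith) (by norm_num), ?_⟩
  intro v hv
  set t : Fin n → ℝ := fun j => mpair v (mixedEmbedding K (β⁻¹ ^ (j : ℕ))) with ht
  have hround : ∀ j : Fin n, |t j - round (t j)| ≤ δ := by
    intro j
    refine round_close_of_exp_close hδ _ ?_
    exact hv (j : ℕ) (by rw [← lamPB_dim hb hgen]; exact j.isLt)
  set w := ∑ j : Fin n, (round (t j) : ℝ) • m j with hw
  have hTw : ∀ j : Fin n, T w j = (round (t j) : ℝ) := by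
    intro j
    rw [hw, map_sum, Finset.sum_apply]
    simp only [LinearMap.map_smul, hm, Pi.smul_apply, smul_eq_mul]
    simp [Pi.single_apply]
  refine ⟨w, ?_, ?_⟩
  · intro z hz
    have hzM := adjoin_int_mem_span hb hint hgen z hz
    obtain ⟨c, hc⟩ := (Submodule.mem_span_range_iff_exists_fun ℤ).mp hzM
    refine ⟨∑ j : Fin n, c j * round (t j), ?_⟩
    have hDz : mixedEmbedding K z
        = ∑ j : Fin n, (c j : ℝ) • mixedEmbedding K (β⁻¹ ^ (j : ℕ)) := by
      rw [← hc, map_sum]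
      exact Finset.sum_congr rfl fun j _ => by
        rw [map_zsmul, ← Int.cast_smul_eq_zsmul ℝ]
    have hkey : mpair w (mixedEmbedding K z)
        = ∑ j : Fin n, (c j : ℝ) * (round (t j) : ℝ) := by
      rw [hDz, ← mpairL_apply, map_sum]
      exact Finset.sum_congr rfl fun j _ => by
        rw [map_smul, smul_eq_mul, mpairL_apply, ← hT, hTw]
    rw [hkey]
    push_cast
    rfl
  · have hvw : v - w = ∑ j : Fin n, (t j - round (t j)) • m j := by
      apply hTinj
      rw [map_sub, map_sum]
      funext j
      simp only [Pi.sub_apply, Finset.sum_apply, LinearMap.map_smul, hm, Pi.smul_apply,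
        smul_eq_mul]
      rw [show T v j = t j from rfl]
      have hms : ∀ x : Fin n, T (m x) j = if j = x then (1:ℝ) else 0 := fun x => by
        rw [hm x, Pi.single_apply]
      simp [hms, Pi.single_apply, mul_ite]
    rw [hvw]
    calc mnorm (∑ j : Fin n, (t j - round (t j)) • m j)
        = ‖mEuc K (∑ j : Fin n, (t j - round (t j)) • m j)‖ := mnorm_eq_norm _
      _ = ‖∑ j : Fin n, (t j - round (t j)) • mEuc K (m j)‖ := by
          simp only [map_sum, map_smul]
      _ ≤ ∑ j : Fin n, ‖(t j - round (t j)) • mEuc K (m j)‖ := norm_sum_le _ _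
      _ = ∑ j : Fin n, |t j - round (t j)| * mnorm (m j) :=
          Finset.sum_congr rfl fun j _ => by
            rw [norm_smul, Real.norm_eq_abs, mnorm_eq_norm]
      _ ≤ ∑ j : Fin n, δ * mnorm (m j) :=
          Finset.sum_le_sum fun j _ =>
            mul_le_mul_of_nonneg_right (hround j) (mnorm_nonneg _)
      _ = δ * C := by rw [← Finset.mul_sum]
      _ ≤ δ * (C + 1) := by nlinarith
      _ = ε := by rw [hδdef]; field_simp
end

section
/- Let μ be a finitely supported probability measure on ℤ whose support is not contained in qℤ + a for any integers q ≥ 2 and a, and let P_μ(z) := ∑_{n∈ℤ} μ({n}) z^n for z on the unit circle of ℂ. Then for every η′ > 0 there exists η > 0 such that every z on the unit circle with |P_μ(z)| ≥ 1 − η satisfies |z − 1| ≤ η′. -/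
/-- `μ` is a finitely supported probability measure on `ℤ`. -/
def IsProbZ (μ : ℤ → ℝ) : Prop :=
  (∀ k, 0 ≤ μ k) ∧ (Function.support μ).Finite ∧ ∑ᶠ k, μ k = 1

/-- The Fourier transform `P_μ(z) = ∑_k μ(k) z^k` of a finitely supported measure on `ℤ`. -/
noncomputable def Pnu (μ : ℤ → ℝ) (z : ℂ) : ℂ := ∑ᶠ k : ℤ, (μ k : ℂ) * z ^ k

/-- A complex number of modulus 1 with real part 1 equals 1. -/
lemma aux_eq_one_of_re_eq_one {w : ℂ} (habs : ‖w‖ = 1) (hre : w.re = 1) :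
    w = 1 := by
  have h2 : w.re ^ 2 + w.im ^ 2 = 1 := by
    have := Complex.sq_norm w
    rw [habs] at this
    simpa [Complex.normSq_apply, sq] using this.symm
  have him : w.im = 0 := by nlinarith
  exact Complex.ext (by simp [hre]) (by simp [him])

/-- If the support of the finitely supported probability measure `μ` on
`ℤ` is not contained in any `qℤ + a` with `q ≥ 2`, then for every `η′ > 0` there is
`η > 0` such that every `z` on the unit circle with `|P_μ(z)| ≥ 1 − η` satisfies
`|z − 1| ≤ η′`. -/
theorem abs_sub_one_le_of_abs_Pnu_ge
    (μ : ℤ → ℝ) (hμ : IsProbZ μ)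
    (hsupp : ¬ ∃ q : ℤ, 2 ≤ q ∧ ∃ a : ℤ, ∀ k : ℤ, μ k ≠ 0 → ∃ t : ℤ, k = q * t + a) :
    ∀ η' : ℝ, 0 < η' → ∃ η : ℝ, 0 < η ∧
      ∀ z : ℂ, ‖z‖ = 1 → 1 - η ≤ ‖Pnu μ z‖ →
        ‖z - 1‖ ≤ η' := by
  obtain ⟨hpos, hfin, hsum⟩ := hμ
  set S : Finset ℤ := hfin.toFinset with hSdef
  have hmemS : ∀ k : ℤ, k ∈ S ↔ μ k ≠ 0 := by
    intro k; simp [hSdef, Set.Finite.mem_toFinset, Function.mem_support]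
  have hsumS : ∑ k ∈ S, μ k = 1 := by
    rw [← hsum]
    exact (finsum_eq_sum_of_support_subset μ (by simp [hSdef])).symm
  -- representation of Pnu as a finite sum
  have hrep : ∀ z : ℂ, z ≠ 0 → Pnu μ z = ∑ k ∈ S, (μ k : ℂ) * z ^ k := by
    intro z hz
    apply finsum_eq_sum_of_support_subset
    intro k hk
    simp only [Function.mem_support] at hk
    have hμk : μ k ≠ 0 := by
      intro h; exact hk (by simp [h])
    simpa [hSdef, Set.Finite.mem_toFinset, Function.mem_support] using hμk
  -- basic bound
  have habs_zpow : ∀ z : ℂ, ‖z‖ = 1 → ∀ k : ℤ, ‖z ^ k‖ = 1 := by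
    intro z hz k
    rw [norm_zpow, hz, one_zpow]
  have hle : ∀ z : ℂ, ‖z‖ = 1 → ‖Pnu μ z‖ ≤ 1 := by
    intro z hz
    have hz0 : z ≠ 0 := by intro h; rw [h] at hz; simp at hz
    rw [hrep z hz0]
    calc ‖∑ k ∈ S, (μ k : ℂ) * z ^ k‖
        ≤ ∑ k ∈ S, ‖(μ k : ℂ) * z ^ k‖ := norm_sum_le _ _
      _ = ∑ k ∈ S, μ k := by
          apply Finset.sum_congr rfl
          intro k _
          rw [norm_mul, habs_zpow z hz k, Complex.norm_real, Real.norm_eq_abs, abs_of_nonneg (hpos k), mul_one]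
      _ = 1 := hsumS
  -- strict inequality away from 1
  have hlt : ∀ z : ℂ, ‖z‖ = 1 → z ≠ 1 → ‖Pnu μ z‖ < 1 := by
    intro z hz hz1
    rcases lt_or_eq_of_le (hle z hz) with h | h
    · exact h
    exfalso
    have hz0 : z ≠ 0 := by intro h; rw [h] at hz; simp at hz
    set P : ℂ := Pnu μ z with hPdef
    have hPabs : ‖P‖ = 1 := h
    have hPsum : P = ∑ k ∈ S, (μ k : ℂ) * z ^ k := hrep z hz0
    -- key: for every k in S, conj P * z^k = 1
    have hkey : ∀ k ∈ S, (starRingEnd ℂ) P * z ^ k = 1 := by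
      have habs_term : ∀ k : ℤ, ‖(starRingEnd ℂ) P * z ^ k‖ = 1 := by
        intro k
        rw [norm_mul, Complex.norm_conj, hPabs, habs_zpow z hz k, one_mul]
      have hsum_re : ∑ k ∈ S, μ k * ((starRingEnd ℂ) P * z ^ k).re = 1 := by
        have h1 : (starRingEnd ℂ) P * P = ((Complex.normSq P : ℝ) : ℂ) := by
          rw [mul_comm, Complex.mul_conj]
        have h2 : (starRingEnd ℂ) P * P = ∑ k ∈ S, (μ k : ℂ) * ((starRingEnd ℂ) P * z ^ k) := by
          nth_rewrite 2 [hPsum]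
          rw [Finset.mul_sum]
          exact Finset.sum_congr rfl (fun k _ => by ring)
        have h3 : ((starRingEnd ℂ) P * P).re = 1 := by
          rw [h1, Complex.ofReal_re, Complex.normSq_eq_norm_sq, hPabs]; norm_num
        rw [h2] at h3
        rw [← h3, Complex.re_sum]
        apply Finset.sum_congr rfl
        intro k _
        rw [Complex.re_ofReal_mul]
      -- each term of ∑ μ k * (1 - re) is zero
      have hzero : ∀ k ∈ S, μ k * (1 - ((starRingEnd ℂ) P * z ^ k).re) = 0 := by
        have htot : ∑ k ∈ S, μ k * (1 - ((starRingEnd ℂ) P * z ^ k).re) = 0 := by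
          rw [Finset.sum_congr rfl (fun k _ => mul_sub (μ k) 1 _), Finset.sum_sub_distrib]
          simp only [mul_one]
          rw [hsumS, hsum_re, sub_self]
        have hnn : ∀ k ∈ S, 0 ≤ μ k * (1 - ((starRingEnd ℂ) P * z ^ k).re) := by
          intro k _
          apply mul_nonneg (hpos k)
          have := Complex.re_le_norm ((starRingEnd ℂ) P * z ^ k)
          rw [habs_term k] at this
          linarith
        intro k hk
        exact (Finset.sum_eq_zero_iff_of_nonneg hnn).mp htot k hk
      intro k hk
      have hμk : μ k ≠ 0 := (hmemS k).mp hk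
      have hre : ((starRingEnd ℂ) P * z ^ k).re = 1 := by
        have := hzero k hk
        rcases mul_eq_zero.mp this with h' | h'
        · exact absurd h' hμk
        · linarith
      exact aux_eq_one_of_re_eq_one (habs_term k) hre
    -- S is nonempty
    have hSne : S.Nonempty := by
      by_contra hne
      rw [Finset.not_nonempty_iff_eq_empty] at hne
      rw [hne] at hsumS
      simp at hsumS
    obtain ⟨k₀, hk₀⟩ := hSne
    -- all powers of z on the support coincide
    have hzpow_eq : ∀ k ∈ S, z ^ (k - k₀) = 1 := by
      intro k hk
      have h1 := hkey k hk
      have h2 := hkey k₀ hk₀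
      have hP0 : (starRingEnd ℂ) P ≠ 0 := by
        intro h'
        rw [h', zero_mul] at h1
        exact one_ne_zero h1.symm
      have : z ^ k = z ^ k₀ := by
        have := h1.trans h2.symm
        exact mul_left_cancel₀ hP0 this
      rw [zpow_sub₀ hz0, this]
      exact div_self (zpow_ne_zero _ hz0)
    -- use the units group
    set u : ℂˣ := Units.mk0 z hz0 with hudef
    have hu_pow : ∀ k ∈ S, u ^ (k - k₀) = 1 := by
      intro k hk
      ext
      rw [Units.val_zpow_eq_zpow_val]
      simpa [hudef] using hzpow_eq k hk
    -- either S = {k₀} or z has finite order ≥ 2; both contradict hsupp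
    apply hsupp
    by_cases hcase : ∀ k ∈ S, k = k₀
    · exact ⟨2, le_refl _, k₀, fun k hμk => ⟨0, by
        rw [mul_zero, zero_add]; exact hcase k ((hmemS k).mpr hμk)⟩⟩
    · push_neg at hcase
      obtain ⟨k₁, hk₁S, hk₁⟩ := hcase
      have hd : k₁ - k₀ ≠ 0 := sub_ne_zero.mpr hk₁
      have hfin_ord : IsOfFinOrder u := by
        rw [isOfFinOrder_iff_pow_eq_one]
        refine ⟨(k₁ - k₀).natAbs, Int.natAbs_pos.mpr hd, ?_⟩
        have h1 := hu_pow k₁ hk₁S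
        rcases Int.natAbs_eq (k₁ - k₀) with he | he
        · rw [← zpow_natCast, ← he, h1]
        · rw [← zpow_natCast]
          have : ((k₁ - k₀).natAbs : ℤ) = -(k₁ - k₀) := by omega
          rw [this, zpow_neg, h1, inv_one]
      have hq0 : orderOf u ≠ 0 := (hfin_ord.orderOf_pos).ne'
      have hq1 : orderOf u ≠ 1 := by
        intro h'
        rw [orderOf_eq_one_iff] at h'
        apply hz1
        have : (u : ℂ) = 1 := by rw [h']; rfl
        simpa [hudef] using this
      have hq2 : 2 ≤ (orderOf u : ℤ) := by omega
      refine ⟨(orderOf u : ℤ), hq2, k₀, fun k hμk => ?_⟩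
      have hkS : k ∈ S := (hmemS k).mpr hμk
      have : ((orderOf u : ℤ)) ∣ (k - k₀) :=
        orderOf_dvd_iff_zpow_eq_one.mpr (hu_pow k hkS)
      obtain ⟨t, ht⟩ := this
      exact ⟨t, by omega⟩
  -- compactness argument
  intro η' hη'
  set K : Set ℂ := Metric.sphere (0 : ℂ) 1 ∩ {z | η' ≤ ‖z - 1‖} with hKdef
  have hKmem : ∀ z ∈ K, ‖z‖ = 1 ∧ η' ≤ ‖z - 1‖ := by
    intro z hz
    obtain ⟨h1, h2⟩ := hz
    refine ⟨?_, h2⟩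
    rw [Metric.mem_sphere, Complex.dist_eq] at h1
    simpa using h1
  have hKcomp : IsCompact K := by
    apply (isCompact_sphere (0 : ℂ) 1).inter_right
    exact isClosed_le continuous_const
      (continuous_norm.comp (continuous_id.sub continuous_const))
  by_cases hKne : K.Nonempty
  · -- f attains its max on K
    have hcont : ContinuousOn (fun z : ℂ => ‖∑ k ∈ S, (μ k : ℂ) * z ^ k‖) K := by
      intro z hz
      have hz0 : z ≠ 0 := by
        intro h
        have := (hKmem z hz).1
        rw [h] at this; simp at this
      have hsumC : ContinuousAt (fun z : ℂ => ∑ k ∈ S, (μ k : ℂ) * z ^ k) z := by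
        apply tendsto_finset_sum
        intro k _
        exact continuousAt_const.mul (continuousAt_zpow₀ z k (Or.inl hz0))
      exact (continuous_norm.continuousAt.comp hsumC).continuousWithinAt
    obtain ⟨z₀, hz₀K, hmax⟩ := hKcomp.exists_isMaxOn hKne hcont
    obtain ⟨hz₀1, hz₀d⟩ := hKmem z₀ hz₀K
    have hz₀0 : z₀ ≠ 0 := by intro h; rw [h] at hz₀1; simp at hz₀1
    have hz₀ne1 : z₀ ≠ 1 := by
      intro h
      rw [h] at hz₀d
      simp at hz₀d
      linarith
    have hmlt : ‖∑ k ∈ S, (μ k : ℂ) * z₀ ^ k‖ < 1 := by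
      rw [← hrep z₀ hz₀0]
      exact hlt z₀ hz₀1 hz₀ne1
    set M : ℝ := ‖∑ k ∈ S, (μ k : ℂ) * z₀ ^ k‖ with hMdef
    refine ⟨(1 - M) / 2, by linarith, fun z hz hPz => ?_⟩
    by_contra hcon
    push_neg at hcon
    have hzK : z ∈ K := by
      constructor
      · rw [Metric.mem_sphere, Complex.dist_eq]; simpa using hz
      · exact le_of_lt hcon
    have hz0 : z ≠ 0 := by intro h; rw [h] at hz; simp at hz
    have h1 : ‖∑ k ∈ S, (μ k : ℂ) * z ^ k‖ ≤ M := hmax hzK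
    rw [hrep z hz0] at hPz
    linarith
  · -- K empty: every z on the circle satisfies |z - 1| < η'
    refine ⟨1, one_pos, fun z hz _ => ?_⟩
    by_contra hcon
    push_neg at hcon
    apply hKne
    refine ⟨z, ?_, le_of_lt hcon⟩
    rw [Metric.mem_sphere, Complex.dist_eq]; simpa using hz
end

section
/- For every positive integer d there is a constant C, depending only on d, with the following property. Let K_1 ⊆ K_2 ⊆ ℝ^d be lattices, and for a lattice L let L^* := { x ∈ ℝ^d : ⟨x, y⟩ ∈ ℤ for all y ∈ L } denote its dual lattice with respect to the standard scalar product (so K_2^* ⊆ K_1^*). If ε > 0 and every v ∈ K_2 with v ∉ K_1 satisfies |v| ≥ C·ε^{−1}, then K_2^* is ε-dense in K_1^*: for every x ∈ K_1^* there exists y ∈ K_2^* with |x − y| ≤ ε. -/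
open scoped RealInnerProductSpace
open Submodule

set_option linter.unusedSectionVars false
set_option maxHeartbeats 1000000

section Helpers

variable {E : Type*} [NormedAddCommGroup E] [InnerProductSpace ℝ E] [FiniteDimensional ℝ E]

/-- A `ℤ`-submodule with a uniform norm gap is discrete. -/
lemma discrete_of_gap (Λ : Submodule ℤ E) {c : ℝ} (hc : 0 < c)
    (h : ∀ v ∈ Λ, v ≠ 0 → c ≤ ‖v‖) : DiscreteTopology Λ := by
  refine discreteTopology_iff_isOpen_singleton_zero.mpr ?_
  rw [Metric.isOpen_singleton_iff]
  refine ⟨c, hc, fun y hy => ?_⟩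
  have h1 : ‖(y : E)‖ < c := by
    have : dist (y : E) (0 : E) < c := hy
    rwa [dist_zero_right] at this
  by_contra hy0
  exact absurd (h y.1 y.2 (fun h0 => hy0 (Subtype.ext h0))) (not_le.mpr h1)

/-- Existence of a shortest nonzero vector in a nontrivial discrete `ℤ`-submodule. -/
lemma exists_min_norm (Λ : Submodule ℤ E) [hd : DiscreteTopology Λ] (hΛ : Λ ≠ ⊥) :
    ∃ b ∈ Λ, b ≠ 0 ∧ ∀ v ∈ Λ, v ≠ 0 → ‖b‖ ≤ ‖v‖ := by
  obtain ⟨v₀, hv₀, hv₀0⟩ := Submodule.exists_mem_ne_zero_of_ne_bot hΛ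
  have hdisc : DiscreteTopology (Λ : Set E) := hd
  have hcl : IsClosed (Λ : Set E) := by
    have : DiscreteTopology Λ.toAddSubgroup := hd
    exact AddSubgroup.isClosed_of_discrete (H := Λ.toAddSubgroup)
  have hfin : (Metric.closedBall (0 : E) ‖v₀‖ ∩ (Λ : Set E)).Finite :=
    Metric.finite_isBounded_inter_isClosed (isDiscrete_iff_discreteTopology.mpr hdisc)
      Metric.isBounded_closedBall hcl
  set T : Set E := {v | (v ∈ Λ ∧ v ≠ 0) ∧ ‖v‖ ≤ ‖v₀‖} with hT
  have hTfin : T.Finite := by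
    refine hfin.subset ?_
    rintro v ⟨⟨hvΛ, -⟩, hvn⟩
    exact ⟨by simpa [Metric.mem_closedBall, dist_zero_right] using hvn, hvΛ⟩
  have hTne : T.Nonempty := ⟨v₀, ⟨hv₀, hv₀0⟩, le_refl _⟩
  obtain ⟨b, hbT, hbmin⟩ := Set.exists_min_image T (fun v => ‖v‖) hTfin hTne
  refine ⟨b, hbT.1.1, hbT.1.2, fun v hv hv0 => ?_⟩
  by_cases hvn : ‖v‖ ≤ ‖v₀‖
  · exact hbmin v ⟨⟨hv, hv0⟩, hvn⟩
  · exact le_trans hbT.2 (le_of_not_ge hvn)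

/-- For a shortest nonzero vector `b₁` of a discrete `ℤ`-submodule `Λ`, there is a vector `dv`
in the real span of `Λ` pairing integrally with `Λ` and with `⟪dv, b₁⟫ = 1`. -/
lemma exists_dual_vector_int (Λ : Submodule ℤ E) [hd : DiscreteTopology Λ] {b₁ : E}
    (hb₁ : b₁ ∈ Λ) (hb₁0 : b₁ ≠ 0) (hmin : ∀ v ∈ Λ, v ≠ 0 → ‖b₁‖ ≤ ‖v‖) :
    ∃ dv ∈ span ℝ (Λ : Set E), ⟪dv, b₁⟫ = 1 ∧ ∀ v ∈ Λ, ∃ k : ℤ, ⟪dv, v⟫ = (k : ℝ) := by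
  classical
  set V : Submodule ℝ E := span ℝ (Λ : Set E) with hV
  let f := V.subtype
  let L₀ : Submodule ℤ V := Λ.comap (f.restrictScalars ℤ)
  have h_img : f '' L₀ = Λ := by
    rw [← LinearMap.coe_restrictScalars ℤ f, ← Submodule.map_coe (f.restrictScalars ℤ),
      Submodule.map_comap_eq_self]
    exact fun x hx ↦ LinearMap.mem_range.mpr ⟨⟨x, Submodule.subset_span hx⟩, rfl⟩
  have : DiscreteTopology L₀ := by
    refine DiscreteTopology.preimage_of_continuous_injective (Λ : Set E) ?_ (injective_subtype _)
    exact LinearMap.continuous_of_finiteDimensional f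
  have : IsZLattice ℝ L₀ := ⟨by
    rw [← (Submodule.map_injective_of_injective (injective_subtype _)).eq_iff, Submodule.map_span,
      Submodule.map_top, range_subtype, h_img]⟩
  have : Module.Finite ℤ L₀ := ZLattice.module_finite ℝ L₀
  have : Module.Free ℤ L₀ := ZLattice.module_free ℝ L₀
  let b := Module.Free.chooseBasis ℤ L₀
  let ι := Module.Free.ChooseBasisIndex ℤ L₀
  let bR := b.ofZLatticeBasis ℝ L₀
  have hb₁V : b₁ ∈ V := Submodule.subset_span hb₁
  let b₁v : L₀ := ⟨⟨b₁, hb₁V⟩, by simpa [L₀, f] using hb₁⟩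
  -- the coordinates of b₁ generate the unit ideal
  set I : Ideal ℤ := Ideal.span (Set.range (fun i => b.repr b₁v i)) with hI
  obtain ⟨g, hg⟩ : ∃ g : ℤ, I = Ideal.span {g} :=
    (IsPrincipalIdealRing.principal I).principal
  have hgdvd : ∀ i, g ∣ b.repr b₁v i := fun i => by
    have : b.repr b₁v i ∈ I := Ideal.subset_span (Set.mem_range_self i)
    rwa [hg, Ideal.mem_span_singleton] at this
  have hg0 : g ≠ 0 := by
    intro h0
    have : b₁v = 0 := by
      have : ∀ i, b.repr b₁v i = 0 := fun i => by
        have := hgdvd i; simpa [h0] using this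
      have hr : b.repr b₁v = 0 := Finsupp.ext fun i => this i
      have := congrArg b.repr.symm hr
      simpa using this
    have : b₁ = 0 := congrArg (fun u : L₀ => ((u : V) : E)) this
    exact hb₁0 this
  -- write b₁ = g • w with w ∈ Λ
  let w : L₀ := ∑ i, (b.repr b₁v i / g) • b i
  have hgw : g • w = b₁v := by
    rw [Finset.smul_sum]
    have : ∀ i, g • ((b.repr b₁v i / g) • b i) = (b.repr b₁v i) • b i := fun i => by
      rw [smul_smul, Int.mul_ediv_cancel' (hgdvd i)]
    simp_rw [this]
    exact b.sum_repr b₁v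
  have hwE : ((w : V) : E) ∈ Λ := w.2
  have hwne : ((w : V) : E) ≠ 0 := by
    intro h0
    have hw0 : w = 0 := by
      ext; exact h0
    have : b₁v = 0 := by rw [← hgw, hw0, smul_zero]
    exact hb₁0 (congrArg (fun u : L₀ => ((u : V) : E)) this)
  have hb₁w : b₁ = g • ((w : V) : E) := by
    have := congrArg (fun u : L₀ => ((u : V) : E)) hgw
    simpa using this.symm
  have hgone : IsUnit g := by
    have h1 : ‖b₁‖ ≤ ‖((w : V) : E)‖ := hmin _ hwE hwne
    have h2 : ‖b₁‖ = |(g : ℝ)| * ‖((w : V) : E)‖ := by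
      rw [hb₁w, ← Int.cast_smul_eq_zsmul ℝ, norm_smul, Real.norm_eq_abs]
    have hwpos : 0 < ‖((w : V) : E)‖ := norm_pos_iff.mpr hwne
    have : |(g : ℝ)| ≤ 1 := by
      nlinarith [h2 ▸ h1]
    have hgi : |g| ≤ 1 := by exact_mod_cast this
    rcases abs_le.mp hgi with ⟨ha, hb⟩
    have : g = 1 ∨ g = -1 := by omega
    exact Int.isUnit_iff.mpr this
  have hItop : I = ⊤ := by
    rw [hg, Ideal.span_singleton_eq_top]; exact hgone
  have h1I : (1 : ℤ) ∈ I := by rw [hItop]; trivial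
  obtain ⟨c, hc⟩ : ∃ c : ι → ℤ, (∑ i, c i • (b.repr b₁v i)) = 1 :=
    (mem_span_range_iff_exists_fun ℤ).mp h1I
  -- build the linear functional
  let φ : V →ₗ[ℝ] ℝ := bR.constr ℝ (fun i => (c i : ℝ))
  have hφint : ∀ u : L₀, ∃ k : ℤ, φ (u : V) = (k : ℝ) := by
    intro u
    refine ⟨∑ i, b.repr u i * c i, ?_⟩
    rw [Module.Basis.constr_apply_fintype]
    have : ∀ i, (bR.equivFun (u : V)) i • ((c i : ℝ)) = ((b.repr u i * c i : ℤ) : ℝ) := by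
      intro i
      rw [Module.Basis.equivFun_apply, Module.Basis.ofZLatticeBasis_repr_apply, smul_eq_mul]
      push_cast; ring
    rw [Finset.sum_congr rfl fun i _ => this i, ← Int.cast_sum]
  have hφb₁ : φ ((b₁v : V)) = 1 := by
    rw [Module.Basis.constr_apply_fintype]
    have : ∀ i, (bR.equivFun (b₁v : V)) i • ((c i : ℝ)) = ((b.repr b₁v i * c i : ℤ) : ℝ) := by
      intro i
      rw [Module.Basis.equivFun_apply, Module.Basis.ofZLatticeBasis_repr_apply, smul_eq_mul]
      push_cast; ring
    rw [Finset.sum_congr rfl fun i _ => this i]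
    rw [← Int.cast_sum]
    have : (∑ i, b.repr b₁v i * c i) = 1 := by
      rw [← hc]; exact Finset.sum_congr rfl fun i _ => mul_comm _ _
    rw [this]; norm_num
  -- turn it into a vector via Riesz representation
  let dv₀ : V := (InnerProductSpace.toDual ℝ V).symm (LinearMap.toContinuousLinearMap φ)
  refine ⟨(dv₀ : E), dv₀.2, ?_, ?_⟩
  · have h1 : ⟪dv₀, ((b₁v : L₀) : V)⟫ = φ ((b₁v : L₀) : V) := InnerProductSpace.toDual_symm_apply
    rw [Submodule.coe_inner] at h1
    exact h1.trans hφb₁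
  · intro v hv
    let u : L₀ := ⟨⟨v, Submodule.subset_span hv⟩, hv⟩
    obtain ⟨k, hk⟩ := hφint u
    refine ⟨k, ?_⟩
    have h1 : ⟪dv₀, (u : V)⟫ = φ (u : V) := InnerProductSpace.toDual_symm_apply
    rw [Submodule.coe_inner] at h1
    exact h1.trans hk

/-- Key transference lemma: if every "witness" `v ∈ Λ` with `⟪x, v⟫ ∉ ℤ` is long,
then `x` is close to the dual lattice. -/
lemma crux : ∀ (n : ℕ) (Λ : Submodule ℤ E), DiscreteTopology Λ →
    Module.finrank ℝ (span ℝ (Λ : Set E)) ≤ n →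
    ∀ S : ℝ, 0 < S → ∀ x ∈ span ℝ (Λ : Set E),
    (∀ v ∈ Λ, (¬ ∃ k : ℤ, ⟪x, v⟫ = (k : ℝ)) → S ≤ ‖v‖) →
    ∃ z ∈ span ℝ (Λ : Set E),
      (∀ v ∈ Λ, ∃ k : ℤ, ⟪z, v⟫ = (k : ℝ)) ∧ ‖x - z‖ ≤ ((2 : ℝ) ^ n - 2⁻¹) / S := by
  intro n
  induction n with
  | zero =>
    intro Λ _ hrank S hS x hx hwit
    have hV : span ℝ (Λ : Set E) = ⊥ := by
      have := Submodule.finrank_eq_zero (R := ℝ) (M := E) (S := span ℝ (Λ : Set E))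
      exact this.mp (Nat.le_zero.mp hrank)
    have hx0 : x = 0 := by rw [hV] at hx; simpa using hx
    refine ⟨0, Submodule.zero_mem _, fun v hv => ⟨0, by simp⟩, ?_⟩
    rw [hx0, sub_zero, norm_zero]
    positivity
  | succ n ih =>
    intro Λ hdisc hrank S hS x hx hwit
    by_cases hW : ∀ v ∈ Λ, ∃ k : ℤ, ⟪x, v⟫ = (k : ℝ)
    · refine ⟨x, hx, hW, ?_⟩
      rw [sub_self, norm_zero]
      have h1 : (1 : ℝ) ≤ 2 ^ (n + 1) := by
        calc (1 : ℝ) = 2 ^ 0 := by norm_num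
        _ ≤ 2 ^ (n + 1) := by
          apply pow_le_pow_right₀ <;> norm_num
      apply div_nonneg (by linarith) hS.le
    · -- there exists a witness, so Λ ≠ ⊥ and we can pick a shortest vector
      push_neg at hW
      obtain ⟨v₀, hv₀Λ, hv₀w⟩ := hW
      have hΛne : Λ ≠ ⊥ := by
        intro hbot
        have h0 : v₀ = 0 := by rwa [hbot, Submodule.mem_bot] at hv₀Λ
        exact hv₀w 0 (by simp [h0])
      obtain ⟨b₁, hb₁Λ, hb₁0, hmin⟩ := exists_min_norm Λ hΛne
      set lam : ℝ := ‖b₁‖ with hlamdef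
      have hlam : 0 < lam := norm_pos_iff.mpr hb₁0
      have hb₁self : ⟪b₁, b₁⟫ = lam ^ 2 := real_inner_self_eq_norm_sq b₁
      -- the orthogonal projection away from b₁
      set pr : E →ₗ[ℝ] E :=
        { toFun := fun v => v - (⟪v, b₁⟫ / lam ^ 2) • b₁
          map_add' := by
            intro a b
            rw [inner_add_left, add_div, add_smul]
            abel
          map_smul' := by
            intro r a
            rw [RingHom.id_apply, real_inner_smul_left, mul_div_assoc, mul_smul, smul_sub]
        } with hprdef
      have hpr_apply : ∀ v, pr v = v - (⟪v, b₁⟫ / lam ^ 2) • b₁ := fun v => rfl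
      have hprb₁ : pr b₁ = 0 := by
        rw [hpr_apply, hb₁self, div_self (by positivity), one_smul, sub_self]
      have hort : ∀ v, ⟪pr v, b₁⟫ = 0 := by
        intro v
        rw [hpr_apply, inner_sub_left, real_inner_smul_left, hb₁self]
        field_simp
        ring
      have hdecomp : ∀ v, v = pr v + (⟪v, b₁⟫ / lam ^ 2) • b₁ := by
        intro v; rw [hpr_apply]; abel
      have hpyth : ∀ (u : E) (c : ℝ), ⟪u, b₁⟫ = 0 →
          ‖u + c • b₁‖ ^ 2 = ‖u‖ ^ 2 + c ^ 2 * lam ^ 2 := by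
        intro u c hu
        rw [norm_add_sq_real, real_inner_smul_right, hu, norm_smul, Real.norm_eq_abs,
          mul_pow, sq_abs]
        ring
      set Λ' : Submodule ℤ E := Λ.map (pr.restrictScalars ℤ) with hΛ'def
      have hΛ'mem : ∀ w, w ∈ Λ' ↔ ∃ v ∈ Λ, pr v = w := by
        intro w
        constructor
        · rintro ⟨v, hv, rfl⟩; exact ⟨v, hv, rfl⟩
        · rintro ⟨v, hv, rfl⟩; exact ⟨v, hv, rfl⟩
      -- reduction of a lattice vector mod b₁
      have hred : ∀ v ∈ Λ, ∃ v' ∈ Λ, pr v' = pr v ∧ |⟪v', b₁⟫ / lam ^ 2| ≤ 2⁻¹ ∧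
          ∃ k : ℤ, v' = v - (k : ℝ) • b₁ := by
        intro v hv
        set k : ℤ := round (⟪v, b₁⟫ / lam ^ 2) with hk
        refine ⟨v - (k : ℝ) • b₁, ?_, ?_, ?_, k, rfl⟩
        · rw [Int.cast_smul_eq_zsmul]
          exact Submodule.sub_mem _ hv (Submodule.smul_mem _ _ hb₁Λ)
        · rw [map_sub, map_smul, hprb₁, smul_zero, sub_zero]
        · rw [inner_sub_left, real_inner_smul_left, hb₁self, sub_div, mul_div_assoc,
            div_self (by positivity : lam ^ 2 ≠ 0), mul_one]
          simpa [hk] using abs_sub_round (⟪v, b₁⟫ / lam ^ 2)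
      -- the dual vector
      obtain ⟨dv, hdvV, hdvb₁, hdvint⟩ := exists_dual_vector_int Λ hb₁Λ hb₁0 hmin
      set t : ℝ := ⟪x, b₁⟫ with htdef
      set m : ℤ := round t with hmdef
      set s : ℝ := t - m with hsdef
      have hsabs : |s| ≤ 2⁻¹ := by simpa [hsdef, hmdef] using abs_sub_round t
      set x'' : E := x - (m : ℝ) • dv - (s / lam ^ 2) • b₁ with hx''def
      have hx''b₁ : ⟪x'', b₁⟫ = 0 := by
        rw [hx''def, inner_sub_left, inner_sub_left, real_inner_smul_left, real_inner_smul_left,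
          hdvb₁, hb₁self, div_mul_cancel₀ _ (by positivity : lam ^ 2 ≠ 0)]
        simp [hsdef, htdef]
      set V : Submodule ℝ E := span ℝ (Λ : Set E) with hVdef
      set V' : Submodule ℝ E := span ℝ (Λ' : Set E) with hV'def
      have hV'map : V' = V.map pr := by
        rw [hV'def, hVdef, hΛ'def, Submodule.map_coe, LinearMap.coe_restrictScalars,
          Submodule.span_image]
      have hV'leV : V' ≤ V := by
        rw [hV'map]
        rintro y ⟨u, hu, rfl⟩
        rw [hpr_apply]
        exact Submodule.sub_mem _ hu (Submodule.smul_mem _ _ (Submodule.subset_span hb₁Λ))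
      have hV'b : ∀ y ∈ V', ⟪y, b₁⟫ = 0 := by
        rw [hV'map]
        rintro y ⟨u, hu, rfl⟩
        exact hort u
      have hx''V' : x'' ∈ V' := by
        rw [hV'map]
        refine ⟨x - (m : ℝ) • dv, Submodule.sub_mem _ hx (Submodule.smul_mem _ _ hdvV), ?_⟩
        rw [hpr_apply, inner_sub_left, real_inner_smul_left, hdvb₁, mul_one, hx''def]
      -- Λ' is discrete
      have hgap : ∀ w ∈ Λ', w ≠ 0 → lam / 2 ≤ ‖w‖ := by
        intro w hw hw0
        obtain ⟨v, hv, rfl⟩ := (hΛ'mem w).mp hw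
        obtain ⟨v', hv'Λ, hv'pr, hv'c, -⟩ := hred v hv
        have hv'0 : v' ≠ 0 := by
          intro h0
          exact hw0 (by rw [← hv'pr, h0, map_zero])
        have hv'lam : lam ≤ ‖v'‖ := hmin v' hv'Λ hv'0
        have hpy : ‖v'‖ ^ 2 = ‖pr v‖ ^ 2 + (⟪v', b₁⟫ / lam ^ 2) ^ 2 * lam ^ 2 := by
          have := hpyth (pr v') (⟪v', b₁⟫ / lam ^ 2) (hort v')
          rw [← hdecomp v', hv'pr] at this
          exact this
        have hc2 : (⟪v', b₁⟫ / lam ^ 2) ^ 2 ≤ 4⁻¹ := by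
          calc (⟪v', b₁⟫ / lam ^ 2) ^ 2 ≤ (2⁻¹ : ℝ) ^ 2 :=
                sq_le_sq' (neg_le_of_abs_le hv'c) (le_of_abs_le hv'c)
          _ = 4⁻¹ := by norm_num
        nlinarith [norm_nonneg (pr v), sq_nonneg lam]
      haveI hdisc' : DiscreteTopology Λ' := discrete_of_gap Λ' (by positivity) hgap
      -- rank goes down
      have hrank' : Module.finrank ℝ V' ≤ n := by
        have hb₁V' : b₁ ∉ V' := by
          intro h
          have := hV'b b₁ h
          rw [hb₁self] at this
          nlinarith
        have hlt : V' < V' ⊔ (ℝ ∙ b₁) := by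
          refine lt_of_le_of_ne le_sup_left (fun h => hb₁V' ?_)
          rw [h]
          exact Submodule.mem_sup_right (Submodule.mem_span_singleton_self b₁)
        have hle : V' ⊔ (ℝ ∙ b₁) ≤ V :=
          sup_le hV'leV ((Submodule.span_singleton_le_iff_mem _ _).mpr
            (Submodule.subset_span hb₁Λ))
        have h1 := Submodule.finrank_lt_finrank_of_lt hlt
        have h2 := Submodule.finrank_mono hle
        omega
      -- witnesses for x'' in Λ' are long
      have hwit' : ∀ w ∈ Λ', (¬ ∃ k : ℤ, ⟪x'', w⟫ = (k : ℝ)) → S / 2 ≤ ‖w‖ := by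
        intro w hw hnk
        obtain ⟨v, hv, rfl⟩ := (hΛ'mem w).mp hw
        obtain ⟨v', hv'Λ, hv'pr, hv'c, k₁, hv'k⟩ := hred v hv
        have hw0 : pr v ≠ 0 := by
          intro h0
          exact hnk ⟨0, by rw [h0]; simp⟩
        have hv'0 : v' ≠ 0 := by
          intro h0
          exact hw0 (by rw [← hv'pr, h0, map_zero])
        have hv'lam : lam ≤ ‖v'‖ := hmin v' hv'Λ hv'0
        obtain ⟨k₂, hk₂⟩ := hdvint v' hv'Λ
        have hxv' : ⟪x'', v'⟫ = ⟪x'', pr v⟫ := by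
          conv_lhs => rw [hdecomp v']
          rw [inner_add_right, real_inner_smul_right, hx''b₁, hv'pr]
          ring
        have hexp : ⟪x'', v'⟫ = ⟪x, v'⟫ - (m : ℝ) * (k₂ : ℝ) - (s / lam ^ 2) * ⟪b₁, v'⟫ := by
          rw [hx''def, inner_sub_left, inner_sub_left, real_inner_smul_left,
            real_inner_smul_left, hk₂]
        have hSv' : S ≤ ‖v'‖ := by
          by_cases hcase : ∃ k : ℤ, t = (k : ℝ)
          · obtain ⟨k₀, hk₀⟩ := hcase
            have hs0 : s = 0 := by
              rw [hsdef, hmdef, hk₀, round_intCast, sub_self]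
            refine hwit v' hv'Λ ?_
            rintro ⟨k₃, hk₃⟩
            refine hnk ⟨k₃ - m * k₂, ?_⟩
            rw [← hxv', hexp, hk₃, hs0]
            push_cast
            ring
          · have hSlam : S ≤ lam := hwit b₁ hb₁Λ (by simpa [← htdef] using hcase)
            linarith
        have hpy : ‖v'‖ ^ 2 = ‖pr v‖ ^ 2 + (⟪v', b₁⟫ / lam ^ 2) ^ 2 * lam ^ 2 := by
          have := hpyth (pr v') (⟪v', b₁⟫ / lam ^ 2) (hort v')
          rw [← hdecomp v', hv'pr] at this
          exact this
        have hc2 : (⟪v', b₁⟫ / lam ^ 2) ^ 2 ≤ 4⁻¹ := by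
          calc (⟪v', b₁⟫ / lam ^ 2) ^ 2 ≤ (2⁻¹ : ℝ) ^ 2 :=
                sq_le_sq' (neg_le_of_abs_le hv'c) (le_of_abs_le hv'c)
          _ = 4⁻¹ := by norm_num
        nlinarith [norm_nonneg (pr v), sq_nonneg lam, hS.le, norm_nonneg v']
      -- apply the induction hypothesis
      obtain ⟨z', hz'V', hz'int, hz'close⟩ :=
        ih Λ' hdisc' hrank' (S / 2) (by positivity) x'' hx''V' hwit'
      have hz'b₁ : ⟪z', b₁⟫ = 0 := hV'b z' hz'V'
      refine ⟨(m : ℝ) • dv + z', Submodule.add_mem _ (Submodule.smul_mem _ _ hdvV)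
        (hV'leV hz'V'), ?_, ?_⟩
      · -- integrality
        intro v hv
        obtain ⟨k₂, hk₂⟩ := hdvint v hv
        obtain ⟨k₃, hk₃⟩ := hz'int (pr v) ((hΛ'mem (pr v)).mpr ⟨v, hv, rfl⟩)
        refine ⟨m * k₂ + k₃, ?_⟩
        rw [inner_add_left, real_inner_smul_left, hk₂]
        have : ⟪z', v⟫ = (k₃ : ℝ) := by
          conv_lhs => rw [hdecomp v]
          rw [inner_add_right, real_inner_smul_right, hz'b₁, hk₃]
          ring
        rw [this]
        push_cast
        ring
      · -- distance bound
        set A : ℝ := ((2 : ℝ) ^ (n + 1) - 1) / S with hAdef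
        set B : ℝ := 1 / (2 * S) with hBdef
        have hB0 : (0 : ℝ) < B := by rw [hBdef]; positivity
        have hA : ‖x'' - z'‖ ≤ A := by
          refine le_trans hz'close (le_of_eq ?_)
          rw [hAdef]
          field_simp
          ring
        have hA0 : (0 : ℝ) ≤ A := le_trans (norm_nonneg _) hA
        have hT : ((2 : ℝ) ^ (n + 1) - 2⁻¹) / S = A + B := by
          rw [hAdef, hBdef]
          field_simp
          ring
        have hxz : x - ((m : ℝ) • dv + z') = (x'' - z') + (s / lam ^ 2) • b₁ := by
          rw [hx''def]; abel
        have hperp : ⟪x'' - z', b₁⟫ = 0 := by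
          rw [inner_sub_left, hx''b₁, hz'b₁, sub_zero]
        have hnorm : ‖x - ((m : ℝ) • dv + z')‖ ^ 2 =
            ‖x'' - z'‖ ^ 2 + (s / lam ^ 2) ^ 2 * lam ^ 2 := by
          rw [hxz]
          exact hpyth _ _ hperp
        rw [hT]
        by_cases hcase : ∃ k : ℤ, t = (k : ℝ)
        · obtain ⟨k₀, hk₀⟩ := hcase
          have hs0 : s = 0 := by
            rw [hsdef, hmdef, hk₀, round_intCast, sub_self]
          have h2 : ‖x - ((m : ℝ) • dv + z')‖ ^ 2 ≤ A ^ 2 := by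
            rw [hnorm, hs0]
            simp only [zero_div, ne_eq, zero_pow, zero_mul, add_zero]
            · nlinarith [norm_nonneg (x'' - z')]
          have := le_of_pow_le_pow_left₀ two_ne_zero hA0 h2
          linarith
        · have hSlam : S ≤ lam := hwit b₁ hb₁Λ (by simpa [← htdef] using hcase)
          have hs2 : s ^ 2 ≤ 4⁻¹ := by
            calc s ^ 2 ≤ (2⁻¹ : ℝ) ^ 2 :=
                  sq_le_sq' (neg_le_of_abs_le hsabs) (le_of_abs_le hsabs)
            _ = 4⁻¹ := by norm_num
          have hterm : (s / lam ^ 2) ^ 2 * lam ^ 2 ≤ B ^ 2 := by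
            have h1 : (s / lam ^ 2) ^ 2 * lam ^ 2 = s ^ 2 / lam ^ 2 := by
              field_simp
            have hlam2 : S ^ 2 ≤ lam ^ 2 := by nlinarith
            have h2 : s ^ 2 / lam ^ 2 ≤ 4⁻¹ / S ^ 2 :=
              div_le_div₀ (by norm_num) hs2 (by positivity) hlam2
            have h3 : (4⁻¹ : ℝ) / S ^ 2 = B ^ 2 := by
              rw [hBdef]
              field_simp
              ring
            rw [h1]
            linarith
          have h2 : ‖x - ((m : ℝ) • dv + z')‖ ^ 2 ≤ (A + B) ^ 2 := by
            rw [hnorm]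
            nlinarith [norm_nonneg (x'' - z'), mul_nonneg hA0 hB0.le]
          exact le_of_pow_le_pow_left₀ two_ne_zero (by positivity) h2

/-- For every `d` there is a constant `C = C(d)` such that, for lattices
`K₁ ⊆ K₂ ⊆ ℝ^d` and `ε > 0`, if every `v ∈ K₂ ∖ K₁` has `|v| ≥ C ε⁻¹`, then the dual
lattice `K₂^*` is `ε`-dense in the dual lattice `K₁^*`. -/
theorem exists_const_dual_lattice_dense
    (d : ℕ) (hd : 0 < d) :
    ∃ C : ℝ, ∀ K1 K2 : Submodule ℤ (EuclideanSpace ℝ (Fin d)),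
      ∀ (h1 : DiscreteTopology K1) (h2 : DiscreteTopology K2),
      @IsZLattice ℝ _ _ _ _ K1 h1 → @IsZLattice ℝ _ _ _ _ K2 h2 →
      K1 ≤ K2 →
      ∀ ε : ℝ, 0 < ε →
      (∀ v ∈ K2, v ∉ K1 → C * ε⁻¹ ≤ ‖v‖) →
      ∀ x : EuclideanSpace ℝ (Fin d),
        (∀ y ∈ K1, ∃ n : ℤ, ⟪x, y⟫ = (n : ℝ)) →
        ∃ z : EuclideanSpace ℝ (Fin d),
          (∀ y ∈ K2, ∃ n : ℤ, ⟪z, y⟫ = (n : ℝ)) ∧ ‖x - z‖ ≤ ε := by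
  refine ⟨2 ^ d, ?_⟩
  intro K1 K2 h1 h2 hz1 hz2 hle ε hε hgap x hx
  have hS : (0 : ℝ) < 2 ^ d * ε⁻¹ := by positivity
  have hrank : Module.finrank ℝ (span ℝ (K2 : Set (EuclideanSpace ℝ (Fin d)))) ≤ d := by
    have := Submodule.finrank_le (span ℝ (K2 : Set (EuclideanSpace ℝ (Fin d))))
    simpa [finrank_euclideanSpace_fin] using this
  have hxmem : x ∈ span ℝ (K2 : Set (EuclideanSpace ℝ (Fin d))) := by
    rw [hz2.span_top]; trivial
  have hwit : ∀ v ∈ K2, (¬ ∃ k : ℤ, ⟪x, v⟫ = (k : ℝ)) → 2 ^ d * ε⁻¹ ≤ ‖v‖ := by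
    intro v hv hnk
    refine hgap v hv fun hvK1 => hnk (hx v hvK1)
  obtain ⟨z, hzmem, hzint, hzclose⟩ := crux d K2 h2 hrank _ hS x hxmem hwit
  refine ⟨z, hzint, le_trans hzclose ?_⟩
  rw [div_le_iff₀ hS]
  have h1' : (1 : ℝ) ≤ 2 ^ d := by
    calc (1 : ℝ) = 2 ^ 0 := by norm_num
    _ ≤ 2 ^ d := by apply pow_le_pow_right₀ <;> norm_num
  calc (2 : ℝ) ^ d - 2⁻¹ ≤ 2 ^ d := by norm_num
  _ = ε * (2 ^ d * ε⁻¹) := by field_simp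
end Helpers
end

section
/- Let S be a finite set of primes and, for each p ∈ S, let V_p be a finite-dimensional vector space over the p-adic field ℚ_p equipped with its canonical (Hausdorff ℚ_p-module) topology. Let V := ∏_{p∈S} V_p carry the product topology and let H ⊆ V be a closed subgroup of the additive group of V. Then H = ∏_{p∈S} H_p, where H_p is the image of H under the projection V → V_p; equivalently, for every h = (h_p)_{p∈S} ∈ H and every p ∈ S, the element of V that equals h_p in the p-coordinate and 0 in all other coordinates also belongs to H. -/
/-- Let `S = {p i}` be a finite set of (distinct) primes and, for each
`i`, let `V i` be a finite-dimensional `ℚ_[p i]`-vector space with its canonical Hausdorff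
topological vector space topology. If `H` is a closed subgroup of the additive group
`∏ i, V i`, then `H` is the product of its projections: for every `h ∈ H` and every
index `i`, the element equal to `h i` in the `i`-th coordinate and `0` elsewhere also
belongs to `H`. -/
theorem closed_subgroup_pi_padic_eq_prod
    (ι : Type) [Fintype ι] [DecidableEq ι] (p : ι → ℕ) [∀ i, Fact (p i).Prime]
    (hinj : Function.Injective p)
    (V : ι → Type) [∀ i, AddCommGroup (V i)] [∀ i, Module ℚ_[p i] (V i)]
    [∀ i, TopologicalSpace (V i)] [∀ i, IsTopologicalAddGroup (V i)]
    [∀ i, ContinuousSMul ℚ_[p i] (V i)] [∀ i, T2Space (V i)]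
    [∀ i, FiniteDimensional ℚ_[p i] (V i)]
    (H : AddSubgroup (∀ i, V i)) (hH : IsClosed (H : Set (∀ i, V i))) :
    ∀ h ∈ H, ∀ i : ι, Pi.single i (h i) ∈ H := by
  intro h hh i
  -- Construct integers n k with n k ≡ 1 mod (p i)^k and n k ≡ 0 mod (p j)^k for j ≠ i.
  have key : ∀ k : ℕ, ∃ n : ℤ, ((p i : ℤ) ^ k) ∣ (n - 1) ∧
      ∀ j, j ≠ i → ((p j : ℤ) ^ k) ∣ n := by
    intro k
    set m : ℕ := ∏ j ∈ Finset.univ.erase i, (p j) ^ k with hm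
    have hcop : Nat.Coprime ((p i) ^ k) m := by
      apply Nat.Coprime.pow_left
      apply Nat.Coprime.prod_right
      intro j hj
      apply Nat.Coprime.pow_right
      exact (Nat.coprime_primes (Fact.out : (p i).Prime) (Fact.out : (p j).Prime)).mpr
        (fun e => (Finset.mem_erase.mp hj).1 (hinj e.symm))
    have hic : IsCoprime ((p i : ℤ) ^ k) (m : ℤ) := by
      rw [show ((p i : ℤ) ^ k) = (((p i) ^ k : ℕ) : ℤ) by push_cast; ring]
      exact (Nat.isCoprime_iff_coprime).mpr hcop
    obtain ⟨a, b, hab⟩ := hic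
    refine ⟨b * (m : ℤ), ⟨-a, by linarith⟩, fun j hj => ?_⟩
    refine Dvd.dvd.mul_left ?_ b
    have : (p j) ^ k ∣ m := Finset.dvd_prod_of_mem (fun j => (p j) ^ k)
      (Finset.mem_erase.mpr ⟨hj, Finset.mem_univ j⟩)
    exact_mod_cast Int.natCast_dvd_natCast.mpr this
  choose n hn1 hn2 using key
  -- Each coordinate of n k • h converges.
  have tendnorm : ∀ (q : ℕ) [Fact q.Prime] (c : ℕ → ℚ_[q]) (a : ℚ_[q]),
      (∀ k, ‖c k - a‖ ≤ (q : ℝ) ^ (-(k : ℤ))) →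
      Filter.Tendsto c Filter.atTop (nhds a) := by
    intro q hq c a hb
    rw [tendsto_iff_norm_sub_tendsto_zero]
    apply squeeze_zero (fun k => norm_nonneg _) hb
    have h1 : (0:ℝ) ≤ (q : ℝ)⁻¹ := by positivity
    have h2 : (q : ℝ)⁻¹ < 1 := by
      rw [inv_lt_one_iff₀]
      exact Or.inr (by exact_mod_cast hq.out.one_lt)
    have := tendsto_pow_atTop_nhds_zero_of_lt_one h1 h2
    refine this.congr fun k => ?_
    rw [zpow_neg, ← inv_zpow, zpow_natCast]
  have tend : Filter.Tendsto (fun k => (n k) • h) Filter.atTop (nhds (Pi.single i (h i))) := by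
    rw [tendsto_pi_nhds]
    intro j
    by_cases hj : j = i
    · subst hj
      simp only [Pi.single_eq_same, Pi.smul_apply]
      have hc : Filter.Tendsto (fun k => ((n k : ℚ_[p j]))) Filter.atTop (nhds 1) := by
        apply tendnorm
        intro k
        have : ((n k : ℚ_[p j]) - 1) = (((n k - 1 : ℤ)) : ℚ_[p j]) := by push_cast; ring
        rw [this, Padic.norm_int_le_pow_iff_dvd]
        exact hn1 k
      have := hc.smul_const (h j)
      rw [one_smul] at this
      exact this.congr fun k => by rw [Int.cast_smul_eq_zsmul]
    · simp only [Pi.single_eq_of_ne hj, Pi.smul_apply]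
      have hc : Filter.Tendsto (fun k => ((n k : ℚ_[p j]))) Filter.atTop (nhds 0) := by
        apply tendnorm
        intro k
        have : ((n k : ℚ_[p j]) - 0) = (((n k : ℤ)) : ℚ_[p j]) := by rw [sub_zero]
        rw [this, Padic.norm_int_le_pow_iff_dvd]
        exact hn2 k j hj
      have := hc.smul_const (h j)
      rw [zero_smul] at this
      exact this.congr fun k => by rw [Int.cast_smul_eq_zsmul]
  exact hH.mem_of_tendsto tend (Filter.Eventually.of_forall fun k => H.zsmul_mem hh (n k))
end
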